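/- arXiv:2206.13364 — 14 statements merged into one kernel-verified Lean document; each statement's English description precedes it below -/
import Mathlib

section
/- Let f : ℝ → ℝ be a bounded continuous function, and suppose there exist an integer m ≥ 1 and rational functions R_0, …, R_{m−1} (each a quotient p/q of real polynomials with q nowhere vanishing on ℝ) such that f(x)^m + R_{m−1}(x)·f(x)^{m−1} + … + R_0(x) = 0 for every x ∈ ℝ. Then f(x) converges to a finite limit as x → +∞, and f(x) also converges to a finite limit as x → −∞. -/
open Filter Polynomial

lemma aux_atTop (f : ℝ → ℝ) (hf_cont : Continuous f)
    (C : ℝ) (hC : ∀ x : ℝ, |f x| ≤ C)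
    (m : ℕ) (hm : 1 ≤ m)
    (p q : Fin m → Polynomial ℝ)
    (hq : ∀ i : Fin m, ∀ x : ℝ, (q i).eval x ≠ 0)
    (halg : ∀ x : ℝ,
      f x ^ m + ∑ i : Fin m, ((p i).eval x / (q i).eval x) * f x ^ (i : ℕ) = 0) :
    ∃ c : ℝ, Tendsto f atTop (nhds c) := by
  classical
  set Q : Polynomial ℝ := ∏ i, q i with hQdef
  have hqne : ∀ i, q i ≠ 0 := fun i h => hq i 0 (by simp [h])
  have hQne : Q ≠ 0 := Finset.prod_ne_zero_iff.mpr fun i _ => hqne i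
  set g : Fin m → Polynomial ℝ :=
    fun i => p i * ∏ j ∈ Finset.univ.erase i, q j with hgdef
  -- pointwise polynomial identity
  have key : ∀ x : ℝ,
      Q.eval x * f x ^ m + ∑ i : Fin m, (g i).eval x * f x ^ (i : ℕ) = 0 := by
    intro x
    have h0 : Q.eval x *
        (f x ^ m + ∑ i : Fin m, ((p i).eval x / (q i).eval x) * f x ^ (i : ℕ)) = 0 := by
      rw [halg x, mul_zero]
    rw [mul_add, Finset.mul_sum] at h0
    rw [← h0]
    congr 1
    refine Finset.sum_congr rfl fun i _ => ?_
    have hsplit : Q.eval x = (q i).eval x * ((∏ j ∈ Finset.univ.erase i, q j).eval x) := by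
      rw [hQdef, ← Polynomial.eval_mul, Finset.mul_prod_erase _ _ (Finset.mem_univ i)]
    rw [hgdef]
    simp only [Polynomial.eval_mul]
    rw [hsplit]
    field_simp [hq i x]
  set A : ℕ → Polynomial ℝ := fun j =>
    Polynomial.C (Q.coeff j) * X ^ m + ∑ i : Fin m, Polynomial.C ((g i).coeff j) * X ^ (i : ℕ)
    with hAdef
  have hAeval : ∀ j (y : ℝ), (A j).eval y
      = Q.coeff j * y ^ m + ∑ i : Fin m, (g i).coeff j * y ^ (i : ℕ) := by
    intro j y
    simp [hAdef, Polynomial.eval_finset_sum]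
  set D : ℕ := max Q.natDegree (Finset.univ.sup fun i : Fin m => (g i).natDegree) with hDdef
  have hQd : Q.natDegree < D + 1 := Nat.lt_succ_of_le (le_max_left _ _)
  have hgd : ∀ i, (g i).natDegree < D + 1 := fun i => Nat.lt_succ_of_le
    (le_max_of_le_right (Finset.le_sup (f := fun i => (g i).natDegree) (Finset.mem_univ i)))
  have expand : ∀ x y : ℝ, ∑ j ∈ Finset.range (D + 1), (A j).eval y * x ^ j
      = Q.eval x * y ^ m + ∑ i : Fin m, (g i).eval x * y ^ (i : ℕ) := by
    intro x y
    calc ∑ j ∈ Finset.range (D + 1), (A j).eval y * x ^ j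
        = ∑ j ∈ Finset.range (D + 1), (Q.coeff j * x ^ j * y ^ m
            + ∑ i : Fin m, (g i).coeff j * x ^ j * y ^ (i : ℕ)) := by
          refine Finset.sum_congr rfl fun j _ => ?_
          rw [hAeval, add_mul, Finset.sum_mul]
          congr 1
          · ring
          · exact Finset.sum_congr rfl fun i _ => by ring
      _ = (∑ j ∈ Finset.range (D + 1), Q.coeff j * x ^ j) * y ^ m
            + ∑ i : Fin m, (∑ j ∈ Finset.range (D + 1), (g i).coeff j * x ^ j) * y ^ (i : ℕ) := by
          rw [Finset.sum_add_distrib]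
          congr 1
          · rw [Finset.sum_mul]
          · rw [Finset.sum_comm]
            exact Finset.sum_congr rfl fun i _ => (Finset.sum_mul _ _ _).symm
      _ = Q.eval x * y ^ m + ∑ i : Fin m, (g i).eval x * y ^ (i : ℕ) := by
          rw [← Polynomial.eval_eq_sum_range' hQd]
          exact congrArg _ (Finset.sum_congr rfl fun i _ => by
            rw [← Polynomial.eval_eq_sum_range' (hgd i)])
  -- coefficient at y^m
  have hAcoeff : ∀ j, (A j).coeff m = Q.coeff j := by
    intro j
    rw [hAdef]
    simp only [Polynomial.coeff_add, Polynomial.coeff_C_mul, Polynomial.coeff_X_pow,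
      Polynomial.finset_sum_coeff, if_pos rfl]
    have h0 : (∑ i : Fin m, ((g i).coeff j) * (if m = (i : ℕ) then (1:ℝ) else 0)) = 0 :=
      Finset.sum_eq_zero fun i _ => by
        rw [if_neg (Nat.ne_of_gt i.is_lt), mul_zero]
    rw [h0, add_zero]; simp
  have hzero : ∀ x : ℝ, ∑ j ∈ Finset.range (D + 1), (A j).eval (f x) * x ^ j = 0 :=
    fun x => (expand x (f x)).trans (key x)
  have hAne : A Q.natDegree ≠ 0 := by
    intro h
    apply hQne
    have h2 := hAcoeff Q.natDegree
    rw [h] at h2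
    simp only [Polynomial.coeff_zero] at h2
    exact Polynomial.leadingCoeff_eq_zero.mp h2.symm
  clear_value A
  clear hAdef key expand hAcoeff
  set s : Finset ℕ := (Finset.range (D + 1)).filter (fun j => A j ≠ 0) with hsdef
  have hsne : s.Nonempty := ⟨Q.natDegree, Finset.mem_filter.mpr ⟨Finset.mem_range.mpr hQd, hAne⟩⟩
  set N : ℕ := s.max' hsne with hNdef
  have hNmem : N ∈ s := s.max'_mem hsne
  have hAN : A N ≠ 0 := (Finset.mem_filter.mp hNmem).2
  have hND : N < D + 1 := Finset.mem_range.mp (Finset.mem_filter.mp hNmem).1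
  have hvanish : ∀ j, N < j → j < D + 1 → A j = 0 := by
    intro j h1 h2
    by_contra h
    exact absurd (Finset.le_max' s j (Finset.mem_filter.mpr ⟨Finset.mem_range.mpr h2, h⟩))
      (not_le.mpr h1)
  have hzero' : ∀ x : ℝ, ∑ j ∈ Finset.range (N + 1), (A j).eval (f x) * x ^ j = 0 := by
    intro x
    rw [← hzero x]
    refine Finset.sum_subset (Finset.range_subset_range.mpr hND) fun j hj hj' => ?_
    rw [hvanish j (Nat.lt_of_succ_le (not_lt.mp (fun h => hj' (Finset.mem_range.mpr h))))
      (Finset.mem_range.mp hj)]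
    simp
  -- bounds on composed polynomials
  have hbound : ∀ j, ∃ M : ℝ, ∀ x : ℝ, |(A j).eval (f x)| ≤ M := by
    intro j
    obtain ⟨M, hM⟩ := (isCompact_Icc (a := -C) (b := C)).exists_bound_of_continuousOn
      ((A j).continuous_aeval).continuousOn
    exact ⟨M, fun x => by
      have := hM (f x) (by rw [Set.mem_Icc]; constructor <;> [linarith [(abs_le.mp (hC x)).1];
        exact (abs_le.mp (hC x)).2])
      simpa [Real.norm_eq_abs] using this⟩
  -- frequent values are roots of A N
  have hroot : ∀ c : ℝ, (∃ᶠ x in atTop, f x = c) → (A N).eval c = 0 := by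
    intro c hc
    set L : Filter ℝ := atTop ⊓ Filter.principal {x | f x = c} with hLdef
    have hLne : L.NeBot := frequently_iff_neBot.mp hc
    have h1L : ∀ᶠ x in L, (1 : ℝ) ≤ x := (eventually_ge_atTop 1).filter_mono inf_le_left
    have hcL : ∀ᶠ x in L, f x = c :=
      (eventually_inf_principal).mpr (Eventually.of_forall fun x hx => hx)
    set F : ℝ → ℝ := fun x => ∑ j ∈ Finset.range (N + 1), (A j).eval (f x) * (x ^ j / x ^ N)
      with hFdef
    have hF0 : Tendsto F L (nhds 0) := by
      apply Tendsto.congr' _ tendsto_const_nhds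
      filter_upwards [h1L] with x hx
      have hxne : x ^ N ≠ 0 := pow_ne_zero _ (by linarith)
      rw [hFdef]
      simp only
      rw [show (0:ℝ) = (∑ j ∈ Finset.range (N + 1), (A j).eval (f x) * x ^ j) / x ^ N by
        rw [hzero' x, zero_div]]
      rw [Finset.sum_div]
      exact Finset.sum_congr rfl fun j _ => by rw [mul_div_assoc]
    have hFlim : Tendsto F L (nhds ((A N).eval c)) := by
      have hsmall : Tendsto
          (fun x => ∑ j ∈ Finset.range N, (A j).eval (f x) * (x ^ j / x ^ N)) L (nhds 0) := by
        have := tendsto_finset_sum (Finset.range N)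
          (f := fun j x => (A j).eval (f x) * (x ^ j / x ^ N)) (x := L)
          (a := fun _ => (0:ℝ)) ?_
        · simpa using this
        · intro j hj
          obtain ⟨M, hM⟩ := hbound j
          have hpow : Tendsto (fun x : ℝ => x ^ j / x ^ N) L (nhds 0) :=
            (tendsto_pow_div_pow_atTop_zero (Finset.mem_range.mp hj)).mono_left inf_le_left
          refine squeeze_zero_norm (fun x => ?_) (by simpa using hpow.abs.const_mul M)
          rw [Real.norm_eq_abs, abs_mul]
          exact mul_le_mul_of_nonneg_right (hM x) (abs_nonneg _)
      have hlast : Tendsto (fun x => (A N).eval (f x) * (x ^ N / x ^ N)) L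
          (nhds ((A N).eval c)) := by
        apply Tendsto.congr' _ tendsto_const_nhds
        filter_upwards [h1L, hcL] with x hx hfx
        rw [hfx, div_self (pow_ne_zero _ (by linarith : (x:ℝ) ≠ 0)), mul_one]
      have := hsmall.add hlast
      rw [zero_add] at this
      refine Tendsto.congr (fun x => ?_) this
      rw [hFdef]
      exact (Finset.sum_range_succ _ N).symm
    exact (tendsto_nhds_unique hFlim hF0)
  -- liminf / limsup
  have hbddle : IsBoundedUnder (· ≤ ·) atTop f :=
    isBoundedUnder_of ⟨C, fun x => (abs_le.mp (hC x)).2⟩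
  have hbddge : IsBoundedUnder (· ≥ ·) atTop f :=
    isBoundedUnder_of ⟨-C, fun x => (abs_le.mp (hC x)).1⟩
  have hlu : liminf f atTop ≤ limsup f atTop := liminf_le_limsup hbddle hbddge
  have heq : liminf f atTop = limsup f atTop := by
    by_contra hne
    have hlt : liminf f atTop < limsup f atTop := lt_of_le_of_ne hlu hne
    have hsub : Set.Ioo (liminf f atTop) (limsup f atTop) ⊆ {y | (A N).IsRoot y} := by
      intro c hc
      refine hroot c ?_
      rw [frequently_atTop]
      intro b
      obtain ⟨a1, ha1b, ha1⟩ := frequently_atTop.mp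
        (frequently_lt_of_lt_limsup (hbddge.isCoboundedUnder_le) hc.2) b
      obtain ⟨a2, ha2a, ha2⟩ := frequently_atTop.mp
        (frequently_lt_of_liminf_lt (hbddle.isCoboundedUnder_ge) hc.1) a1
      have hIcc : c ∈ Set.Icc (f a2) (f a1) := ⟨le_of_lt ha2, le_of_lt ha1⟩
      obtain ⟨x, hxmem, hxc⟩ := intermediate_value_Icc' ha2a hf_cont.continuousOn hIcc
      exact ⟨x, le_trans ha1b hxmem.1, hxc⟩
    exact (Set.Ioo_infinite hlt) (Set.Finite.subset (Polynomial.finite_setOf_isRoot hAN) hsub)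
  exact ⟨limsup f atTop, tendsto_of_liminf_eq_limsup heq rfl hbddle hbddge⟩


/-- A bounded continuous real function satisfying a monic polynomial
equation with rational-function coefficients (denominators nowhere vanishing on ℝ)
has finite limits at +∞ and at −∞. -/
theorem bounded_continuous_algebraic_has_limits
    (f : ℝ → ℝ) (hf_cont : Continuous f)
    (hf_bdd : ∃ C : ℝ, ∀ x : ℝ, |f x| ≤ C)
    (m : ℕ) (hm : 1 ≤ m)
    (p q : Fin m → Polynomial ℝ)
    (hq : ∀ i : Fin m, ∀ x : ℝ, (q i).eval x ≠ 0)
    (halg : ∀ x : ℝ,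
      f x ^ m + ∑ i : Fin m, ((p i).eval x / (q i).eval x) * f x ^ (i : ℕ) = 0) :
    (∃ c : ℝ, Filter.Tendsto f Filter.atTop (nhds c)) ∧
    (∃ c : ℝ, Filter.Tendsto f Filter.atBot (nhds c)) := by
  obtain ⟨C, hC⟩ := hf_bdd
  constructor
  · exact aux_atTop f hf_cont C hC m hm p q hq halg
  · set g : ℝ → ℝ := fun x => f (-x) with hgdef
    have hgc : Continuous g := hf_cont.comp continuous_neg
    have hgb : ∀ x : ℝ, |g x| ≤ C := fun x => hC (-x)
    set p' : Fin m → Polynomial ℝ := fun i => (p i).comp (-Polynomial.X) with hp'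
    set q' : Fin m → Polynomial ℝ := fun i => (q i).comp (-Polynomial.X) with hq'
    have hq'ne : ∀ i : Fin m, ∀ x : ℝ, (q' i).eval x ≠ 0 := fun i x => by
      rw [hq', Polynomial.eval_comp]; simpa using hq i (-x)
    have halg' : ∀ x : ℝ,
        g x ^ m + ∑ i : Fin m, ((p' i).eval x / (q' i).eval x) * g x ^ (i : ℕ) = 0 := by
      intro x
      simp only [hgdef, hp', hq', Polynomial.eval_comp, Polynomial.eval_neg, Polynomial.eval_X]
      exact halg (-x)
    obtain ⟨c, hc⟩ := aux_atTop g hgc C hgb m hm p' q' hq'ne halg'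
    refine ⟨c, ?_⟩
    have h2 := hc.comp tendsto_neg_atBot_atTop
    have : (g ∘ fun x : ℝ => -x) = f := by
      funext x; simp [hgdef]
    rwa [this] at h2
end

section
/- Fix positive real parameters K1, K2, K3, Nx, Ny, Nz and a ligand concentration L ≥ 0. If positive reals (x, y, z) form a steady state of the IL-7R model, then: (i) K1·z² + (1 + K1·(Nx − Nz))·z − Nz = 0; (ii) K2·(K3·L + 1)·y² + (1 + K2·(K3·L + 1)·(Nx − Ny))·y − Ny = 0; and (iii) Nx·x = (Nx − Ny + y)·(Nx − Nz + z). -/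
/-- The steady-state polynomial system of the IL-7R model at ligand concentration `L`. -/
def IL7RSteadyState (K1 K2 K3 Nx Ny Nz L x y z : ℝ) : Prop :=
  Nx = x + K1*x*z + K2*x*y + K1*K2*x*y*z + K2*K3*L*x*y + K1*K2*K3*L*x*y*z ∧
  Ny = y + K2*x*y + K1*K2*x*y*z + K2*K3*L*x*y + K1*K2*K3*L*x*y*z ∧
  Nz = z + K1*x*z + K1*K2*x*y*z + K1*K2*K3*L*x*y*z

/-- any positive steady state of the IL-7R model satisfies the
triangular (Gröbner basis) relations. -/
theorem il7r_groebner_relations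
    (K1 K2 K3 Nx Ny Nz L x y z : ℝ)
    (hK1 : 0 < K1) (hK2 : 0 < K2) (hK3 : 0 < K3)
    (hNx : 0 < Nx) (hNy : 0 < Ny) (hNz : 0 < Nz)
    (hL : 0 ≤ L) (hx : 0 < x) (hy : 0 < y) (hz : 0 < z)
    (hss : IL7RSteadyState K1 K2 K3 Nx Ny Nz L x y z) :
    K1*z^2 + (1 + K1*(Nx - Nz))*z - Nz = 0 ∧
    K2*(K3*L + 1)*y^2 + (1 + K2*(K3*L + 1)*(Nx - Ny))*y - Ny = 0 ∧
    Nx * x = (Nx - Ny + y) * (Nx - Nz + z) := by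
  obtain ⟨h1, h2, h3⟩ := hss
  subst h1; subst h2; subst h3
  exact ⟨by ring, by ring, by ring⟩
end

section
/- Fix positive real parameters K1, K2, K3, Nx, Ny, Nz. For every ligand concentration L ≥ 0, the reals z*, y*(L), x*(L) given by the explicit formulas are strictly positive, and the triple (x*(L), y*(L), z*) is a steady state of the IL-7R model at ligand concentration L. -/
noncomputable def delta1 (K1 Nx Nz : ℝ) : ℝ := 4*K1*Nz + (K1*(Nx - Nz) + 1)^2

noncomputable def zstar (K1 Nx Nz : ℝ) : ℝ :=
  (-1 + K1*(Nz - Nx) + Real.sqrt (delta1 K1 Nx Nz)) / (2*K1)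

noncomputable def delta2 (K2 K3 Nx Ny L : ℝ) : ℝ :=
  4*K2*Ny*(K3*L + 1) + (K2*(Nx - Ny)*(K3*L + 1) + 1)^2

noncomputable def ystar (K2 K3 Nx Ny L : ℝ) : ℝ :=
  (-1 + K2*(Ny - Nx)*(K3*L + 1) + Real.sqrt (delta2 K2 K3 Nx Ny L)) / (2*K2*(K3*L + 1))

noncomputable def xstar (K1 K2 K3 Nx Ny Nz L : ℝ) : ℝ :=
  (Nx - Ny + ystar K2 K3 Nx Ny L) / (1 + K1 * zstar K1 Nx Nz)

set_option maxHeartbeats 800000 in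
/-- the explicit formulas give a positive steady state of the IL-7R model
for every ligand concentration `L ≥ 0`. -/
theorem il7r_explicit_steady_state
    (K1 K2 K3 Nx Ny Nz : ℝ)
    (hK1 : 0 < K1) (hK2 : 0 < K2) (hK3 : 0 < K3)
    (hNx : 0 < Nx) (hNy : 0 < Ny) (hNz : 0 < Nz) :
    ∀ L : ℝ, 0 ≤ L →
      0 < zstar K1 Nx Nz ∧
      0 < ystar K2 K3 Nx Ny L ∧
      0 < xstar K1 K2 K3 Nx Ny Nz L ∧
      IL7RSteadyState K1 K2 K3 Nx Ny Nz L
        (xstar K1 K2 K3 Nx Ny Nz L) (ystar K2 K3 Nx Ny L) (zstar K1 Nx Nz) := by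
  intro L hL
  have hM : 0 < K3*L + 1 := by nlinarith [mul_nonneg hK3.le hL]
  -- z part
  have hd1 : 0 ≤ delta1 K1 Nx Nz := by unfold delta1; positivity
  set s := Real.sqrt (delta1 K1 Nx Nz) with hsdef
  have hsnn : 0 ≤ s := Real.sqrt_nonneg _
  have hs2 : s^2 = 4*K1*Nz + (K1*(Nx - Nz) + 1)^2 := by
    have := Real.sq_sqrt hd1
    rw [← hsdef] at this
    rw [this]; unfold delta1; ring
  have hsgt : K1*(Nx-Nz)+1 < s := by nlinarith [mul_pos hK1 hNz]
  have hz0 : 0 < zstar K1 Nx Nz := by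
    rw [zstar, ← hsdef]
    apply div_pos _ (by linarith)
    linarith
  set z := zstar K1 Nx Nz with hzdef
  have hzq : z + K1*(Nx-Nz)*z + K1*z^2 = Nz := by
    rw [hzdef, zstar, ← hsdef]
    field_simp
    ring_nf
    nlinarith [hs2]
  -- y part
  have hd2 : 0 ≤ delta2 K2 K3 Nx Ny L := by unfold delta2; positivity
  set t := Real.sqrt (delta2 K2 K3 Nx Ny L) with htdef
  have htnn : 0 ≤ t := Real.sqrt_nonneg _
  have ht2 : t^2 = 4*K2*Ny*(K3*L + 1) + (K2*(Nx - Ny)*(K3*L + 1) + 1)^2 := by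
    have := Real.sq_sqrt hd2
    rw [← htdef] at this
    rw [this]; unfold delta2; ring
  have htgt : K2*(Nx-Ny)*(K3*L+1)+1 < t := by nlinarith [mul_pos (mul_pos hK2 hNy) hM]
  have hy0 : 0 < ystar K2 K3 Nx Ny L := by
    rw [ystar, ← htdef]
    apply div_pos _ (by positivity)
    nlinarith
  set y := ystar K2 K3 Nx Ny L with hydef
  have hyq : y + K2*(Nx-Ny)*(K3*L+1)*y + K2*(K3*L+1)*y^2 = Ny := by
    rw [hydef, ystar, ← htdef]
    field_simp
    linear_combination ht2
  have hu : 0 < Nx - Ny + y := by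
    nlinarith [mul_pos (mul_pos hK2 hM) hy0]
  have hP : 0 < 1 + K1 * z := by positivity
  have hx0 : 0 < xstar K1 K2 K3 Nx Ny Nz L := by
    rw [xstar, ← hydef, ← hzdef]; exact div_pos hu hP
  refine ⟨hz0, hy0, hx0, ?_, ?_, ?_⟩
  · rw [xstar, ← hydef, ← hzdef]
    field_simp
    linear_combination (-(1 + K1*z)) * hyq
  · rw [xstar, ← hydef, ← hzdef]
    field_simp
    linear_combination (-(1 + K1*z)) * hyq
  · rw [xstar, ← hydef, ← hzdef]
    field_simp
    linear_combination -hzq - K1*z*hyq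
end

section
/- Fix positive real parameters K1, K2, K3, Nx, Ny, Nz and a ligand concentration L ≥ 0. If positive reals (x, y, z) form a steady state of the IL-7R model, then the number of signalling complexes satisfies K1·K2·K3·L·x·y·z = (K1·z/(1 + K1·z))·(K3·L/(1 + K3·L))·(Ny − y). -/
/-- at any positive steady state of the IL-7R model, the number of
signalling complexes factorises as stated. -/
theorem il7r_signalling_factorisation
    (K1 K2 K3 Nx Ny Nz L x y z : ℝ)
    (hK1 : 0 < K1) (hK2 : 0 < K2) (hK3 : 0 < K3)
    (hNx : 0 < Nx) (hNy : 0 < Ny) (hNz : 0 < Nz)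
    (hL : 0 ≤ L) (hx : 0 < x) (hy : 0 < y) (hz : 0 < z)
    (hss : IL7RSteadyState K1 K2 K3 Nx Ny Nz L x y z) :
    K1*K2*K3*L*x*y*z = (K1*z/(1 + K1*z)) * (K3*L/(1 + K3*L)) * (Ny - y) := by
  obtain ⟨-, h2, -⟩ := hss
  have d1 : (1 + K1*z) ≠ 0 := by positivity
  have d2 : (1 + K3*L) ≠ 0 := by positivity
  subst h2
  field_simp
  ring
end

section
/- Fix positive real parameters K1, K2, K3, Nx, Ny, Nz and define z*, y*(L), x*(L) by the explicit formulas. Then the signalling function σ(L) = K1·K2·K3·L·x*(L)·y*(L)·z* converges, as L → +∞, to the amplitude A = min(Nx, Ny)·K1·z*/(1 + K1·z*). -/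
noncomputable def gaux (K2 Nx Ny t : ℝ) : ℝ :=
  (Real.sqrt ((K2*(Nx-Ny)+t)^2 + 4*K2*Ny*t) - (K2*(Nx-Ny)+t)) / (2*K2)

lemma zstar_pos (K1 Nx Nz : ℝ) (hK1 : 0 < K1) (hNz : 0 < Nz) :
    0 < zstar K1 Nx Nz := by
  have hd : (K1*(Nx - Nz) + 1)^2 < delta1 K1 Nx Nz := by
    unfold delta1; nlinarith
  have h1 : K1*(Nx - Nz) + 1 < Real.sqrt (delta1 K1 Nx Nz) := by
    rcases le_or_gt (K1*(Nx-Nz)+1) 0 with h | h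
    · exact lt_of_le_of_lt h (Real.sqrt_pos.mpr (lt_of_le_of_lt (sq_nonneg _) hd))
    · exact (Real.lt_sqrt h.le).mpr hd
  unfold zstar
  apply div_pos _ (by linarith)
  linarith

lemma ystar_eq (K2 K3 Nx Ny : ℝ) (hK2 : 0 < K2) (hK3 : 0 < K3) (L : ℝ) (hL : 0 ≤ L) :
    ystar K2 K3 Nx Ny L = gaux K2 Nx Ny (1/(K3*L+1)) := by
  have hM : 0 < K3*L+1 := by nlinarith
  have hMne : K3*L+1 ≠ 0 := ne_of_gt hM
  have hS : delta2 K2 K3 Nx Ny L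
      = (K3*L+1)^2 * ((K2*(Nx-Ny)+1/(K3*L+1))^2 + 4*K2*Ny*(1/(K3*L+1))) := by
    unfold delta2; field_simp; ring
  have hsq : Real.sqrt (delta2 K2 K3 Nx Ny L)
      = (K3*L+1) * Real.sqrt ((K2*(Nx-Ny)+1/(K3*L+1))^2 + 4*K2*Ny*(1/(K3*L+1))) := by
    rw [hS, Real.sqrt_mul (sq_nonneg _), Real.sqrt_sq hM.le]
  unfold ystar gaux
  rw [hsq]
  field_simp
  ring

lemma gaux_quad (K2 Nx Ny t : ℝ) (hK2 : 0 < K2) (hNy : 0 < Ny) (ht : 0 < t) :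
    K2 * (gaux K2 Nx Ny t) * (Nx - Ny + gaux K2 Nx Ny t) + t * (gaux K2 Nx Ny t)
      = t * Ny := by
  have hS : (0:ℝ) ≤ (K2*(Nx-Ny)+t)^2 + 4*K2*Ny*t := by positivity
  have hsq := Real.sq_sqrt hS
  unfold gaux
  field_simp
  have e : (K2*(Nx-Ny)+t)^2 + K2*Ny*t*4 = (K2*(Nx-Ny)+t)^2 + 4*K2*Ny*t := by ring
  rw [e]
  linear_combination hsq

lemma gaux_cont (K2 Nx Ny : ℝ) : Continuous (gaux K2 Nx Ny) := by
  unfold gaux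
  fun_prop

lemma gaux_zero (K2 Nx Ny : ℝ) (hK2 : 0 < K2) :
    gaux K2 Nx Ny 0 = max (Ny - Nx) 0 := by
  unfold gaux
  rw [mul_zero, add_zero, add_zero, Real.sqrt_sq_eq_abs]
  rcases le_total Nx Ny with h | h
  · rw [abs_of_nonpos (by nlinarith), max_eq_left (by linarith)]
    field_simp; ring
  · rw [abs_of_nonneg (by nlinarith), max_eq_right (by linarith)]
    simp

/-- the signalling function of the IL-7R model converges, as `L → +∞`,
to the amplitude `min(Nx,Ny)·K1·z*/(1 + K1·z*)`. -/
theorem il7r_signalling_tendsto_amplitude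
    (K1 K2 K3 Nx Ny Nz : ℝ)
    (hK1 : 0 < K1) (hK2 : 0 < K2) (hK3 : 0 < K3)
    (hNx : 0 < Nx) (hNy : 0 < Ny) (hNz : 0 < Nz) :
    Filter.Tendsto
      (fun L : ℝ => K1*K2*K3*L * xstar K1 K2 K3 Nx Ny Nz L * ystar K2 K3 Nx Ny L
        * zstar K1 Nx Nz)
      Filter.atTop
      (nhds (min Nx Ny * K1 * zstar K1 Nx Nz / (1 + K1 * zstar K1 Nx Nz))) := by
  have hz := zstar_pos K1 Nx Nz hK1 hNz
  set z := zstar K1 Nx Nz with hzdef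
  have hden : (0:ℝ) < 1 + K1 * z := by positivity
  have hdenne : (1:ℝ) + K1 * z ≠ 0 := ne_of_gt hden
  -- M(L) = K3*L + 1 → ∞
  have htM : Filter.Tendsto (fun L : ℝ => K3*L+1) Filter.atTop Filter.atTop := by
    apply Filter.tendsto_atTop_add_const_right
    exact Filter.Tendsto.const_mul_atTop hK3 Filter.tendsto_id
  have ht0 : Filter.Tendsto (fun L : ℝ => 1/(K3*L+1)) Filter.atTop (nhds 0) := by
    simpa [one_div, Pi.inv_def] using htM.inv_tendsto_atTop
  -- limit of ystar
  have hy : Filter.Tendsto (fun L : ℝ => ystar K2 K3 Nx Ny L) Filter.atTop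
      (nhds (max (Ny - Nx) 0)) := by
    have h1 : Filter.Tendsto (fun L : ℝ => gaux K2 Nx Ny (1/(K3*L+1))) Filter.atTop
        (nhds (gaux K2 Nx Ny 0)) :=
      ((gaux_cont K2 Nx Ny).tendsto 0).comp ht0
    rw [gaux_zero K2 Nx Ny hK2] at h1
    apply h1.congr'
    filter_upwards [Filter.eventually_ge_atTop 0] with L hL
    exact (ystar_eq K2 K3 Nx Ny hK2 hK3 L hL).symm
  -- limit of K3*L/(K3*L+1)
  have hr : Filter.Tendsto (fun L : ℝ => K3*L/(K3*L+1)) Filter.atTop (nhds 1) := by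
    have h1 : Filter.Tendsto (fun L : ℝ => 1 - 1/(K3*L+1)) Filter.atTop (nhds (1-0)) :=
      Filter.Tendsto.sub tendsto_const_nhds ht0
    rw [sub_zero] at h1
    apply h1.congr'
    filter_upwards [Filter.eventually_ge_atTop 0] with L hL
    have hM : K3*L+1 ≠ 0 := by nlinarith
    field_simp
    ring
  -- main limit of the product
  have hmain : Filter.Tendsto
      (fun L : ℝ => (K1*z/(1+K1*z)) * ((K3*L/(K3*L+1)) * (Ny - ystar K2 K3 Nx Ny L)))
      Filter.atTop
      (nhds ((K1*z/(1+K1*z)) * (1 * (Ny - max (Ny - Nx) 0)))) :=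
    Filter.Tendsto.const_mul _ (hr.mul (tendsto_const_nhds.sub hy))
  have heq : min Nx Ny * K1 * z / (1 + K1 * z)
      = (K1*z/(1+K1*z)) * (1 * (Ny - max (Ny - Nx) 0)) := by
    rcases le_total Nx Ny with h | h
    · rw [min_eq_left h, max_eq_left (by linarith)]
      field_simp; ring
    · rw [min_eq_right h, max_eq_right (by linarith)]
      field_simp; ring
  rw [heq]
  apply hmain.congr'
  filter_upwards [Filter.eventually_ge_atTop 0] with L hL
  have hM : (0:ℝ) < K3*L+1 := by nlinarith
  have hMne : K3*L+1 ≠ 0 := ne_of_gt hM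
  have ht : (0:ℝ) < 1/(K3*L+1) := by positivity
  have hq := gaux_quad K2 Nx Ny (1/(K3*L+1)) hK2 hNy ht
  have hye := ystar_eq K2 K3 Nx Ny hK2 hK3 L hL
  set y := ystar K2 K3 Nx Ny L with hy'
  rw [← hye] at hq
  -- hq : K2 * y * (Nx - Ny + y) + (1/(K3*L+1)) * y = (1/(K3*L+1)) * Ny
  show (K1*z/(1+K1*z)) * ((K3*L/(K3*L+1)) * (Ny - y))
      = K1*K2*K3*L * xstar K1 K2 K3 Nx Ny Nz L * y * z
  unfold xstar
  rw [← hy', ← hzdef]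
  have hq2 : K2*y*(Nx - Ny + y)*(K3*L+1) + y = Ny := by
    field_simp at hq
    linarith
  field_simp
  linear_combination (-L) * hq2
end

section
/- Fix positive real parameters K1, K2, K3, Nx, Ny, Nz, set M = min(Nx, Ny), and define L50 = M·(1 + K2·(Nx + Ny − M) + √(1 + K2²·(Ny − Nx)² + 2·K2·(Nx + Ny − M)))/(K2·K3·(M − 2·Nx)·(M − 2·Ny)). Then L50 > 0, and the signalling function evaluated at L50 equals half the amplitude: K1·K2·K3·L50·x*(L50)·y*(L50)·z* = (1/2)·M·K1·z*/(1 + K1·z*). -/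
/-- The explicit EC₅₀ expression for the IL-7R model, with `M = min Nx Ny`. -/
noncomputable def L50 (K2 K3 Nx Ny : ℝ) : ℝ :=
  min Nx Ny *
    (1 + K2*(Nx + Ny - min Nx Ny)
      + Real.sqrt (1 + K2^2*(Ny - Nx)^2 + 2*K2*(Nx + Ny - min Nx Ny)))
    / (K2*K3*(min Nx Ny - 2*Nx)*(min Nx Ny - 2*Ny))

set_option maxHeartbeats 1000000 in
/-- `L50 > 0` and the signalling function evaluated at `L50` equals
half the amplitude. -/
theorem il7r_ec50
    (K1 K2 K3 Nx Ny Nz : ℝ)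
    (hK1 : 0 < K1) (hK2 : 0 < K2) (hK3 : 0 < K3)
    (hNx : 0 < Nx) (hNy : 0 < Ny) (hNz : 0 < Nz) :
    0 < L50 K2 K3 Nx Ny ∧
    K1*K2*K3*(L50 K2 K3 Nx Ny)
        * xstar K1 K2 K3 Nx Ny Nz (L50 K2 K3 Nx Ny)
        * ystar K2 K3 Nx Ny (L50 K2 K3 Nx Ny)
        * zstar K1 Nx Nz
      = (1/2) * (min Nx Ny) * K1 * zstar K1 Nx Nz / (1 + K1 * zstar K1 Nx Nz) := by
  have hMx : min Nx Ny ≤ Nx := min_le_left _ _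
  have hMy : min Nx Ny ≤ Ny := min_le_right _ _
  have hM0 : (0:ℝ) < min Nx Ny := lt_min hNx hNy
  set M := min Nx Ny with hMdef
  have hP0 : (0:ℝ) < Nx + Ny - M := by linarith
  have hD : (0:ℝ) < (M - 2*Nx) * (M - 2*Ny) := by nlinarith
  have hrad : (0:ℝ) ≤ 1 + K2^2*(Ny - Nx)^2 + 2*K2*(Nx + Ny - M) := by
    nlinarith [sq_nonneg (K2*(Ny - Nx)), mul_pos hK2 hP0]
  set S := Real.sqrt (1 + K2^2*(Ny - Nx)^2 + 2*K2*(Nx + Ny - M)) with hSdef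
  have hS0 : (0:ℝ) ≤ S := Real.sqrt_nonneg _
  have hS2 : S^2 = 1 + K2^2*(Ny - Nx)^2 + 2*K2*(Nx + Ny - M) := Real.sq_sqrt hrad
  have hLdef : L50 K2 K3 Nx Ny
      = M * (1 + K2*(Nx + Ny - M) + S) / (K2*K3*(M - 2*Nx)*(M - 2*Ny)) := by
    rw [L50, ← hMdef, ← hSdef]
  have hL0 : 0 < L50 K2 K3 Nx Ny := by
    rw [hLdef]
    apply div_pos
    · nlinarith [mul_pos hK2 hP0, hS0, hM0]
    · nlinarith [mul_pos (mul_pos hK2 hK3) hD]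
  refine ⟨hL0, ?_⟩
  set u := K3 * L50 K2 K3 Nx Ny with hudef
  have hu0 : 0 < u := mul_pos hK3 hL0
  have hMNx : M - 2*Nx ≠ 0 := by intro h; nlinarith
  have hMNy : M - 2*Ny ≠ 0 := by intro h; nlinarith
  have hu : K2*((M - 2*Nx)*(M - 2*Ny))*u = M*(1 + K2*(Nx + Ny - M) + S) := by
    rw [hudef, hLdef]
    field_simp
  have hKD : (0:ℝ) < K2*((M - 2*Nx)*(M - 2*Ny)) := mul_pos hK2 hD
  have hstar : K2*((M - 2*Nx)*(M - 2*Ny))*u^2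
      = 2*M*u*(1 + K2*(Nx + Ny - M)) - K2*M^2 := by
    have hsq : (K2*((M - 2*Nx)*(M - 2*Ny)))^2*u^2
        = M^2*(1 + K2*(Nx + Ny - M) + S)^2 := by
      linear_combination (K2*((M - 2*Nx)*(M - 2*Ny))*u + M*(1 + K2*(Nx + Ny - M) + S)) * hu
    apply mul_left_cancel₀ (ne_of_gt hKD)
    linear_combination hsq - 2*M*(1 + K2*(Nx + Ny - M))*hu + M^2*hS2
  have h1 : K2*((M - 2*Nx)*(M - 2*Ny))*((Nx + Ny - M)*u - M)
      = M*((Nx + Ny - M) + K2*(Nx - Ny)^2 + (Nx + Ny - M)*S) := by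
    linear_combination (Nx + Ny - M)*hu
  have hR : 0 ≤ M*((Nx + Ny - M) + K2*(Nx - Ny)^2 + (Nx + Ny - M)*S) := by
    have h7 := mul_nonneg hP0.le hS0
    have h8 := mul_nonneg hK2.le (sq_nonneg (Nx - Ny))
    have h9 : 0 ≤ (Nx + Ny - M) + K2*(Nx - Ny)^2 + (Nx + Ny - M)*S := by linarith
    exact mul_nonneg hM0.le h9
  have hX : 0 ≤ (Nx + Ny - M)*u - M := by
    have h5 : (Nx + Ny - M)*u - M
        = M*((Nx + Ny - M) + K2*(Nx - Ny)^2 + (Nx + Ny - M)*S)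
          / (K2*((M - 2*Nx)*(M - 2*Ny))) := by
      rw [← h1, mul_div_cancel_left₀ _ (ne_of_gt hKD)]
    rw [h5]
    exact div_nonneg hR hKD.le
  have hF0 : 0 ≤ u*(1 + K2*(u+1)*(Nx + Ny)) - K2*M*(u+1)^2 := by
    have h6 : u*(1 + K2*(u+1)*(Nx + Ny)) - K2*M*(u+1)^2
        = u + (K2*(u+1))*((Nx + Ny - M)*u - M) := by ring
    rw [h6]
    have h7 := mul_nonneg (mul_nonneg hK2.le (by linarith : (0:ℝ) ≤ u + 1)) hX
    linarith
  have hd2 : delta2 K2 K3 Nx Ny (L50 K2 K3 Nx Ny)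
      = 4*K2*Ny*(u+1) + (K2*(Nx - Ny)*(u+1) + 1)^2 := by
    rw [delta2, ← hudef]
  have hdelta_sq : delta2 K2 K3 Nx Ny (L50 K2 K3 Nx Ny)
      = ((u*(1 + K2*(u+1)*(Nx + Ny)) - K2*M*(u+1)^2)/u)^2 := by
    rw [hd2, div_pow, eq_div_iff (by positivity : u^2 ≠ 0)]
    linear_combination (-K2)*(u+1)^2 * hstar
  have hsqrt : Real.sqrt (delta2 K2 K3 Nx Ny (L50 K2 K3 Nx Ny))
      = (u*(1 + K2*(u+1)*(Nx + Ny)) - K2*M*(u+1)^2)/u := by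
    rw [hdelta_sq, Real.sqrt_sq (div_nonneg hF0 hu0.le)]
  have hy : ystar K2 K3 Nx Ny (L50 K2 K3 Nx Ny) = Ny - M*(u+1)/(2*u) := by
    rw [ystar, hsqrt, ← hudef]
    have h2 : (0:ℝ) < u + 1 := by linarith
    field_simp
    ring
  -- zstar denominator is positive
  have habs : |K1*(Nx - Nz) + 1| < Real.sqrt (delta1 K1 Nx Nz) := by
    rw [← Real.sqrt_sq_eq_abs]
    apply Real.sqrt_lt_sqrt (sq_nonneg _)
    rw [delta1]
    nlinarith [mul_pos hK1 hNz]
  have hz1 : 0 < 1 + K1 * zstar K1 Nx Nz := by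
    rw [zstar]
    have h2 : K1 * ((-1 + K1*(Nz - Nx) + Real.sqrt (delta1 K1 Nx Nz))/(2*K1))
        = (-1 + K1*(Nz - Nx) + Real.sqrt (delta1 K1 Nx Nz))/2 := by
      field_simp
    rw [h2]
    have h3 := (abs_lt.mp habs).2
    linarith
  have hcore : K2*(2*u*Nx - M*(u+1))*(2*u*Ny - M*(u+1)) = 2*M*u := by
    linear_combination hstar
  have hKL : K1*K2*K3*(L50 K2 K3 Nx Ny) = K1*K2*u := by rw [hudef]; ring
  rw [xstar, hy, hKL]
  set z := zstar K1 Nx Nz with hzdef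
  have h4 : K1*K2*u * ((Nx - Ny + (Ny - M*(u+1)/(2*u)))/(1 + K1*z))
        * (Ny - M*(u+1)/(2*u)) * z
      = (K2*(2*u*Nx - M*(u+1))*(2*u*Ny - M*(u+1))) * (u*(K1*z)) / ((1 + K1*z) * (4*u^2)) := by
    field_simp
    ring
  rw [h4, hcore]
  field_simp
  ring
end

section
/- Let K2, K3, K4, Nx, Ny, Nw be positive reals with Nx > Ny. Then the quadratic polynomial K2²·K3²·(Ny − Nx)·t² + K2·K3·Ny·(1 + K4·(Nw − Nx + Ny))·t + K4·Ny² in the variable t has exactly one positive real root, namely t* = Ny·(1 + K4·(Nw − Nx + Ny) + √(1 + 2·K4·(Nw + Nx − Ny) + K4²·(Nw − Nx + Ny)²))/(2·K2·K3·(Nx − Ny)). -/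
/-- the leading-order quadratic from the perturbation expansion of the
extended IL-7R model has exactly one positive real root, given explicitly. -/
theorem quadratic_unique_positive_root
    (K2 K3 K4 Nx Ny Nw : ℝ)
    (hK2 : 0 < K2) (hK3 : 0 < K3) (hK4 : 0 < K4)
    (hNx : 0 < Nx) (hNy : 0 < Ny) (hNw : 0 < Nw)
    (hNxNy : Nx > Ny) :
    0 < Ny*(1 + K4*(Nw - Nx + Ny)
        + Real.sqrt (1 + 2*K4*(Nw + Nx - Ny) + K4^2*(Nw - Nx + Ny)^2))
        / (2*K2*K3*(Nx - Ny)) ∧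
    (K2^2*K3^2*(Ny - Nx)
        * (Ny*(1 + K4*(Nw - Nx + Ny)
            + Real.sqrt (1 + 2*K4*(Nw + Nx - Ny) + K4^2*(Nw - Nx + Ny)^2))
            / (2*K2*K3*(Nx - Ny)))^2
      + K2*K3*Ny*(1 + K4*(Nw - Nx + Ny))
        * (Ny*(1 + K4*(Nw - Nx + Ny)
            + Real.sqrt (1 + 2*K4*(Nw + Nx - Ny) + K4^2*(Nw - Nx + Ny)^2))
            / (2*K2*K3*(Nx - Ny)))
      + K4*Ny^2 = 0) ∧
    ∀ t : ℝ, 0 < t →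
      K2^2*K3^2*(Ny - Nx)*t^2 + K2*K3*Ny*(1 + K4*(Nw - Nx + Ny))*t + K4*Ny^2 = 0 →
      t = Ny*(1 + K4*(Nw - Nx + Ny)
            + Real.sqrt (1 + 2*K4*(Nw + Nx - Ny) + K4^2*(Nw - Nx + Ny)^2))
            / (2*K2*K3*(Nx - Ny)) := by
  set a : ℝ := K4*(Nw - Nx + Ny) with ha
  set D : ℝ := 1 + 2*K4*(Nw + Nx - Ny) + K4^2*(Nw - Nx + Ny)^2 with hDdef
  have hDeq : D = (1+a)^2 + 4*K4*(Nx-Ny) := by rw [hDdef, ha]; ring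
  have hD0 : 0 ≤ D := by nlinarith [sq_nonneg (1+a)]
  set s : ℝ := Real.sqrt D with hs
  have hs2 : s^2 = D := Real.sq_sqrt hD0
  have hs2' : s^2 = (1+a)^2 + 4*K4*(Nx-Ny) := by rw [hs2, hDeq]
  have hs0 : 0 ≤ s := Real.sqrt_nonneg D
  have hsgt : 1 + a < s := by nlinarith [sq_nonneg (s - (1+a)), sq_nonneg (s + (1+a))]
  have hnum : 0 < 1 + a + s := by nlinarith
  have hden : 0 < 2*K2*K3*(Nx - Ny) := by
    have : 0 < Nx - Ny := by linarith
    positivity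
  have hd : (2*K2*K3*(Nx - Ny)) ≠ 0 := ne_of_gt hden
  set t0 : ℝ := Ny*(1 + a + s) / (2*K2*K3*(Nx - Ny)) with ht0def
  have ht0 : (2*K2*K3*(Nx - Ny)) * t0 = Ny*(1 + a + s) := by
    rw [ht0def]; field_simp [sub_ne_zero.mpr (ne_of_gt hNxNy)]
  refine ⟨div_pos (mul_pos hNy hnum) hden, ?_, ?_⟩
  · have key0 : ((2*K2*K3*(Nx-Ny))*t0 - Ny*(1+a+s))
        * ((2*K2*K3*(Nx-Ny))*t0 - Ny*(1+a-s)) = 0 := by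
      linear_combination ((2*K2*K3*(Nx-Ny))*t0 - Ny*(1+a-s)) * ht0
    have hG4 : (4*(Nx-Ny)) * (K2^2*K3^2*(Ny-Nx)*t0^2 + K2*K3*Ny*(1+a)*t0 + K4*Ny^2) = 0 := by
      linear_combination (-1 : ℝ)*key0 + (-Ny^2)*hs2'
    rcases mul_eq_zero.1 hG4 with h | h
    · exfalso; have : (0:ℝ) < 4*(Nx-Ny) := by linarith
      exact absurd h (ne_of_gt this)
    · linarith [h]
  · intro t ht heq
    have key : (2*K2*K3*(Nx-Ny)*t - Ny*(1+a+s)) * (2*K2*K3*(Nx-Ny)*t - Ny*(1+a-s)) = 0 := by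
      linear_combination (-4*(Nx-Ny))*heq + (-Ny^2)*hs2'
    rcases mul_eq_zero.1 key with h | h
    · have : (2*K2*K3*(Nx - Ny)) * t = Ny*(1+a+s) := by linarith
      rw [ht0def]
      field_simp [sub_ne_zero.mpr (ne_of_gt hNxNy)]
      linarith [this]
    · exfalso
      have h1 : 0 < 2*K2*K3*(Nx-Ny)*t := mul_pos hden ht
      have h2 : Ny*(1+a-s) ≤ 0 := by nlinarith
      linarith
end

section
/- Fix positive real parameters K1, K2, K3, K4, Nx, Ny, Nz, Nw. Suppose x, y, z, w : (0, ∞) → (0, ∞) are continuous functions such that for every L > 0 the quadruple (x(L), y(L), z(L), w(L)) is a steady state of the extended IL-7R model at ligand concentration L, and suppose y is bounded and algebraic on (0, ∞). Then z is constant, equal to z̄ = (−1 + K1·(Nz − Nx) + √((1 + K1·(Nx − Nz))² + 4·K1·Nz))/(2·K1), and the signalling function σ(L) = K1·K2·K3·L·x(L)·y(L)·z(L) converges, as L → +∞, to min(Nx, Ny)·K1·z̄/(1 + K1·z̄). -/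
open Filter Polynomial


/-- The steady-state polynomial system of the extended IL-7R model at ligand
concentration `L`. -/
def ExtIL7RSteadyState (K1 K2 K3 K4 Nx Ny Nz Nw L x y z w : ℝ) : Prop :=
  Nx = x + K2*x*y + K1*x*z + K1*K2*x*y*z + K2*K3*L*x*y + K1*K2*K3*L*x*y*z
        + K4*x*w + K1*K4*x*w*z ∧
  Ny = y + K2*x*y + K1*K2*x*y*z + K2*K3*L*x*y + K1*K2*K3*L*x*y*z ∧
  Nz = z + K1*x*z + K1*K2*x*y*z + K1*K2*K3*L*x*y*z + K1*K4*x*w*z ∧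
  Nw = w + K4*x*w + K1*K4*x*w*z

/-- `f` is an algebraic function on `(0, ∞)`: it satisfies a monic polynomial equation
whose coefficients are rational functions with denominators nowhere vanishing
on `(0, ∞)`. -/
def AlgebraicOnIoi (f : ℝ → ℝ) : Prop :=
  ∃ m : ℕ, 1 ≤ m ∧ ∃ p q : Fin m → Polynomial ℝ,
    (∀ i : Fin m, ∀ L : ℝ, 0 < L → (q i).eval L ≠ 0) ∧
    ∀ L : ℝ, 0 < L →
      f L ^ m + ∑ i : Fin m, ((p i).eval L / (q i).eval L) * f L ^ (i : ℕ) = 0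

lemma tendsto_of_algebraic (y : ℝ → ℝ) (hyc : ContinuousOn y (Set.Ioi 0))
    (B : ℝ) (hybdd : ∀ L : ℝ, 0 < L → |y L| ≤ B) (hyalg : AlgebraicOnIoi y) :
    ∃ ℓ : ℝ, Filter.Tendsto y Filter.atTop (nhds ℓ) := by
  have hev : ∀ᶠ L in atTop, |y L| ≤ B := by
    filter_upwards [eventually_gt_atTop (0:ℝ)] with L hL using hybdd L hL
  have hbdd : IsBoundedUnder (· ≤ ·) atTop y :=
    isBoundedUnder_of_eventually_le (hev.mono fun L h => (abs_le.1 h).2)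
  have hbdd' : IsBoundedUnder (· ≥ ·) atTop y :=
    isBoundedUnder_of_eventually_le (α := ℝᵒᵈ) (hev.mono fun L h => (abs_le.1 h).1)
  set a := liminf y atTop with ha
  set b := limsup y atTop with hb
  rcases eq_or_lt_of_le (liminf_le_limsup hbdd hbdd') with hab | hab
  · exact ⟨a, tendsto_of_liminf_eq_limsup rfl hab.symm hbdd hbdd'⟩
  exfalso
  obtain ⟨m, hm, p, q, hq, halg⟩ := hyalg
  set Q : ℝ → ℝ := fun L => ∏ j, (q j).eval L with hQdef
  have hQ : ∀ L : ℝ, 0 < L → Q L ≠ 0 := fun L hL =>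
    Finset.prod_ne_zero_iff.2 fun j _ => hq j L hL
  -- the two-variable polynomial, specialized at value c
  set G : ℝ → Polynomial ℝ := fun c =>
    C (c ^ m) * ∏ j, q j +
      ∑ i : Fin m, C (c ^ (i : ℕ)) * (p i * ∏ j ∈ Finset.univ.erase i, q j) with hGdef
  have hGeval : ∀ c L : ℝ, 0 < L →
      (G c).eval L = Q L * (c ^ m + ∑ i : Fin m, ((p i).eval L / (q i).eval L) * c ^ (i : ℕ)) := by
    intro c L hL
    simp only [hGdef, eval_add, eval_mul, eval_C, eval_finset_sum, eval_prod, mul_add,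
      Finset.mul_sum]
    rw [mul_comm (Q L) (c ^ m)]
    congr 1
    refine Finset.sum_congr rfl fun i _ => ?_
    have hQi : Q L = (q i).eval L * ∏ j ∈ Finset.univ.erase i, (q j).eval L := by
      rw [hQdef]; exact (Finset.mul_prod_erase Finset.univ _ (Finset.mem_univ i)).symm
    rw [hQi]
    field_simp [hq i L hL]
  -- For c strictly between liminf and limsup, y hits c at unboundedly large L
  have hhits : ∀ c : ℝ, a < c → c < b → ∀ M : ℝ, ∃ L : ℝ, M < L ∧ 0 < L ∧ y L = c := by
    intro c hac hcb M
    have hfreq1 : ∃ᶠ L in atTop, y L < c :=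
      frequently_lt_of_liminf_lt (hbdd.isCoboundedUnder_ge) hac
    have hfreq2 : ∃ᶠ L in atTop, c < y L :=
      frequently_lt_of_lt_limsup (hbdd'.isCoboundedUnder_le) hcb
    obtain ⟨L1, hyL1, hL1⟩ := (hfreq1.and_eventually (eventually_gt_atTop (max M 0))).exists
    obtain ⟨L2, hyL2, hL2⟩ := (hfreq2.and_eventually (eventually_gt_atTop L1)).exists
    have hL1pos : 0 < L1 := lt_of_le_of_lt (le_max_right M 0) hL1
    have hsub : Set.Icc L1 L2 ⊆ Set.Ioi 0 := fun t ht => lt_of_lt_of_le hL1pos ht.1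
    have hc : c ∈ Set.Icc (y L1) (y L2) := ⟨le_of_lt hyL1, le_of_lt hyL2⟩
    obtain ⟨L', hL', hyL'⟩ := intermediate_value_Icc (le_of_lt hL2) (hyc.mono hsub) hc
    exact ⟨L', lt_of_le_of_lt (le_max_left M 0) (lt_of_lt_of_le hL1 hL'.1),
      lt_of_lt_of_le hL1pos hL'.1, hyL'⟩
  -- For such c, the polynomial G c has infinitely many roots, hence is zero
  have hGzero : ∀ c : ℝ, a < c → c < b → G c = 0 := by
    intro c hac hcb
    apply Polynomial.eq_zero_of_infinite_isRoot
    have hSsub : {L : ℝ | 0 < L ∧ y L = c} ⊆ {x | (G c).IsRoot x} := by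
      rintro L ⟨hL, hyL⟩
      have h1 := halg L hL
      rw [hyL] at h1
      have h2 := hGeval c L hL
      show (G c).eval L = 0
      rw [h2, h1, mul_zero]
    refine Set.Infinite.mono hSsub ?_
    intro hfin
    obtain ⟨M, hM⟩ := hfin.bddAbove
    obtain ⟨L, hML, hLpos, hyL⟩ := hhits c hac hcb M
    exact absurd (hM ⟨hLpos, hyL⟩) (not_le.2 hML)
  -- Specialize at L = 1 : the polynomial in the value variable
  set H : Polynomial ℝ := C ((∏ j, q j).eval 1) * X ^ m +
      ∑ i : Fin m, C ((p i * ∏ j ∈ Finset.univ.erase i, q j).eval 1) * X ^ (i : ℕ) with hHdef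
  have hHeval : ∀ c : ℝ, a < c → c < b → H.eval c = 0 := by
    intro c hac hcb
    have h0 : (G c).eval 1 = 0 := by rw [hGzero c hac hcb, eval_zero]
    rw [hGdef] at h0
    have hHG : H.eval c = (G c).eval 1 := by
      rw [hHdef, hGdef]
      simp only [eval_add, eval_mul, eval_C, eval_finset_sum, eval_pow, eval_X]
      rw [mul_comm]
      congr 1
      exact Finset.sum_congr rfl fun i _ => mul_comm _ _
    rw [hHG, hGdef, h0]
  have hH0 : H = 0 := by
    apply Polynomial.eq_zero_of_infinite_isRoot
    refine Set.Infinite.mono ?_ (Set.Ioo_infinite hab)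
    intro c hc
    exact hHeval c hc.1 hc.2
  have hcoeff : H.coeff m = (∏ j, q j).eval 1 := by
    rw [hHdef, Polynomial.coeff_add, Polynomial.finset_sum_coeff]
    rw [Finset.sum_eq_zero fun i _ => by
      simp only [Polynomial.coeff_C_mul, Polynomial.coeff_X_pow,
        if_neg (Nat.ne_of_gt i.is_lt), mul_zero]]
    simp [Polynomial.coeff_C_mul, Polynomial.coeff_X_pow]
  rw [hH0, Polynomial.coeff_zero] at hcoeff
  rw [eval_prod] at hcoeff
  exact hQ 1 one_pos hcoeff.symm

set_option maxHeartbeats 1000000 in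
/-- along any continuous positive steady-state branch of the extended
IL-7R model with `y` bounded and algebraic, the kinase concentration is constant and
equal to `z̄`, and the signalling function converges to the amplitude
`min(Nx,Ny)·K1·z̄/(1 + K1·z̄)` as `L → +∞`. -/
theorem ext_il7r_branch_amplitude
    (K1 K2 K3 K4 Nx Ny Nz Nw : ℝ)
    (hK1 : 0 < K1) (hK2 : 0 < K2) (hK3 : 0 < K3) (hK4 : 0 < K4)
    (hNx : 0 < Nx) (hNy : 0 < Ny) (hNz : 0 < Nz) (hNw : 0 < Nw)
    (x y z w : ℝ → ℝ)
    (hxc : ContinuousOn x (Set.Ioi 0)) (hyc : ContinuousOn y (Set.Ioi 0))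
    (hzc : ContinuousOn z (Set.Ioi 0)) (hwc : ContinuousOn w (Set.Ioi 0))
    (hxp : ∀ L : ℝ, 0 < L → 0 < x L) (hyp : ∀ L : ℝ, 0 < L → 0 < y L)
    (hzp : ∀ L : ℝ, 0 < L → 0 < z L) (hwp : ∀ L : ℝ, 0 < L → 0 < w L)
    (hss : ∀ L : ℝ, 0 < L →
      ExtIL7RSteadyState K1 K2 K3 K4 Nx Ny Nz Nw L (x L) (y L) (z L) (w L))
    (hybdd : ∃ C : ℝ, ∀ L : ℝ, 0 < L → |y L| ≤ C)
    (hyalg : AlgebraicOnIoi y) :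
    (∀ L : ℝ, 0 < L →
      z L = (-1 + K1*(Nz - Nx) + Real.sqrt ((1 + K1*(Nx - Nz))^2 + 4*K1*Nz)) / (2*K1)) ∧
    Filter.Tendsto (fun L : ℝ => K1*K2*K3*L * x L * y L * z L) Filter.atTop
      (nhds (min Nx Ny * K1
          * ((-1 + K1*(Nz - Nx) + Real.sqrt ((1 + K1*(Nx - Nz))^2 + 4*K1*Nz)) / (2*K1))
          / (1 + K1
          * ((-1 + K1*(Nz - Nx) + Real.sqrt ((1 + K1*(Nx - Nz))^2 + 4*K1*Nz)) / (2*K1))))) := by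
  obtain ⟨zb, hzbdef⟩ : ∃ t : ℝ,
      t = (-1 + K1*(Nz - Nx) + Real.sqrt ((1 + K1*(Nx - Nz))^2 + 4*K1*Nz)) / (2*K1) := ⟨_, rfl⟩
  rw [← hzbdef]
  have hzconst : ∀ L : ℝ, 0 < L → z L = zb := by
    intro L hL
    obtain ⟨e1, e2, e3, e4⟩ := hss L hL
    have hquad : K1 * z L ^ 2 + (1 + K1*(Nx - Nz)) * z L - Nz = 0 := by
      linear_combination (K1 * z L) * e1 - (1 + K1 * z L) * e3
    have hz := hzp L hL
    have hb : 0 < K1 * z L + (1 + K1*(Nx-Nz)) := by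
      nlinarith [hquad, hz, hNz]
    have hs : Real.sqrt ((1 + K1*(Nx - Nz))^2 + 4*K1*Nz) = 2*K1*z L + (1 + K1*(Nx-Nz)) := by
      rw [show (1 + K1*(Nx - Nz))^2 + 4*K1*Nz = (2*K1*z L + (1 + K1*(Nx-Nz)))^2 by
        nlinarith [hquad]]
      have h0 : (0:ℝ) ≤ 2*K1*z L + (1 + K1*(Nx-Nz)) := by nlinarith [hb, mul_pos hK1 hz]
      exact Real.sqrt_sq h0
    rw [hzbdef, hs]
    field_simp
    ring
  refine ⟨hzconst, ?_⟩
  have hzb0 : 0 < zb := hzconst 1 one_pos ▸ hzp 1 one_pos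
  have hzb1 : (0:ℝ) < 1 + K1 * zb := by positivity
  -- pointwise identities at the constant value of z
  have hI : ∀ L : ℝ, 0 < L → Ny - y L = K2 * x L * y L * (1+K1*zb) * (1+K3*L) := by
    intro L hL
    have e2 := (hss L hL).2.1
    rw [hzconst L hL] at e2
    linear_combination e2
  have hII : ∀ L : ℝ, 0 < L → Ny - y L = Nx - (1+K1*zb) * (x L + K4 * x L * w L) := by
    intro L hL
    have e1 := (hss L hL).1
    have e2 := (hss L hL).2.1
    rw [hzconst L hL] at e1 e2
    linear_combination e2 - e1
  have hIII : ∀ L : ℝ, 0 < L → w L ≤ Nw := by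
    intro L hL
    have e4 := (hss L hL).2.2.2
    nlinarith [mul_pos hK4 (mul_pos (hxp L hL) (hwp L hL)),
      mul_pos (mul_pos (mul_pos (mul_pos hK1 hK4) (hxp L hL)) (hwp L hL)) (hzp L hL)]
  -- limit of y
  obtain ⟨B, hB⟩ := hybdd
  obtain ⟨ℓ, hl⟩ := tendsto_of_algebraic y hyc B hB hyalg
  have hl0 : 0 ≤ ℓ := ge_of_tendsto hl (by
    filter_upwards [eventually_gt_atTop (0:ℝ)] with L hL using (hyp L hL).le)
  have hTend : Tendsto (fun L => Ny - y L) atTop (nhds (Ny - ℓ)) := tendsto_const_nhds.sub hl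
  have hle : Ny - ℓ ≤ Nx := by
    refine le_of_tendsto hTend ?_
    filter_upwards [eventually_gt_atTop (0:ℝ)] with L hL
    have h2 := hII L hL
    have h4 : 0 < x L + K4 * x L * w L := by
      nlinarith [hxp L hL, mul_pos hK4 (mul_pos (hxp L hL) (hwp L hL))]
    nlinarith [mul_pos hzb1 h4]
  have hinv : Tendsto (fun L : ℝ => (1+K3*L)⁻¹) atTop (nhds 0) := by
    apply Filter.Tendsto.inv_tendsto_atTop
    exact tendsto_atTop_add_const_left _ 1 (Filter.Tendsto.const_mul_atTop hK3 tendsto_id)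
  have hmin : Ny - ℓ = min Nx Ny := by
    rcases eq_or_lt_of_le hl0 with h0 | h0
    · rw [← h0, sub_zero]
      exact (min_eq_right (by linarith)).symm
    · have hy2 : ∀ᶠ L in atTop, ℓ/2 < y L := hl.eventually_const_lt (by linarith)
      set D : ℝ := Ny / (K2 * (ℓ/2) * (1+K1*zb)) with hD
      have hDpos : 0 < K2 * (ℓ/2) * (1+K1*zb) := by positivity
      have hxle : ∀ᶠ L in atTop, x L ≤ D * (1+K3*L)⁻¹ := by
        filter_upwards [eventually_gt_atTop (0:ℝ), hy2] with L hL hyL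
        have h3 : (0:ℝ) < 1 + K3*L := by positivity
        have hx := (hxp L hL).le
        have h1 : K2 * x L * (ℓ/2) * ((1+K1*zb) * (1+K3*L)) ≤
            K2 * x L * y L * ((1+K1*zb) * (1+K3*L)) :=
          mul_le_mul_of_nonneg_right
            (mul_le_mul_of_nonneg_left hyL.le (mul_nonneg hK2.le hx))
            (by positivity)
        have key : x L * (1+K3*L) * (K2 * (ℓ/2) * (1+K1*zb)) ≤ Ny := by
          linarith [h1, hI L hL, hyp L hL]
        rw [← div_eq_mul_inv, le_div_iff₀ h3, hD, le_div_iff₀ hDpos]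
        linarith [key]
      have hx0 : Tendsto x atTop (nhds 0) := by
        refine squeeze_zero' ?_ hxle (by simpa using hinv.const_mul D)
        filter_upwards [eventually_gt_atTop (0:ℝ)] with L hL using (hxp L hL).le
      have hxw0 : Tendsto (fun L => x L + K4 * x L * w L) atTop (nhds 0) := by
        refine squeeze_zero' ?_ ?_ (g := fun L => x L * (1 + K4*Nw)) ?_
        · filter_upwards [eventually_gt_atTop (0:ℝ)] with L hL
          nlinarith [hxp L hL, mul_pos hK4 (mul_pos (hxp L hL) (hwp L hL))]
        · filter_upwards [eventually_gt_atTop (0:ℝ)] with L hL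
          have := mul_le_mul_of_nonneg_left (hIII L hL) (mul_nonneg hK4.le (hxp L hL).le)
          linarith [this]
        · simpa using hx0.mul_const (1 + K4*Nw)
      have hTend2 : Tendsto (fun L => Ny - y L) atTop (nhds Nx) := by
        have h5 : Tendsto (fun L => Nx - (1+K1*zb) * (x L + K4 * x L * w L)) atTop
            (nhds (Nx - (1+K1*zb) * 0)) := tendsto_const_nhds.sub (hxw0.const_mul _)
        rw [mul_zero, sub_zero] at h5
        refine h5.congr' ?_
        filter_upwards [eventually_gt_atTop (0:ℝ)] with L hL
        exact (hII L hL).symm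
      have hNxeq : Ny - ℓ = Nx := tendsto_nhds_unique hTend hTend2
      rw [hNxeq]
      exact (min_eq_left (by linarith)).symm
  have hR : Tendsto (fun L : ℝ => K3*L/(1+K3*L)) atTop (nhds 1) := by
    have h5 : Tendsto (fun L : ℝ => 1 - (1+K3*L)⁻¹) atTop (nhds (1 - 0)) :=
      tendsto_const_nhds.sub hinv
    rw [sub_zero] at h5
    refine h5.congr' ?_
    filter_upwards [eventually_gt_atTop (0:ℝ)] with L hL
    have h3 : (0:ℝ) < 1 + K3*L := by positivity
    field_simp
    ring
  rw [hmin] at hTend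
  have hfin : Tendsto (fun L => (Ny - y L) * (K1*zb/(1+K1*zb)) * (K3*L/(1+K3*L))) atTop
      (nhds (min Nx Ny * (K1*zb/(1+K1*zb)) * 1)) := (hTend.mul_const _).mul hR
  have hval : min Nx Ny * (K1*zb/(1+K1*zb)) * 1 = min Nx Ny * K1 * zb / (1 + K1*zb) := by
    ring
  rw [hval] at hfin
  refine hfin.congr' ?_
  filter_upwards [eventually_gt_atTop (0:ℝ)] with L hL
  have h3 : (0:ℝ) < 1 + K3*L := by positivity
  rw [hzconst L hL, hI L hL]
  field_simp
end

section
/- For any SRLK steady-state branch, the signalling function σ(L) = K_0·z(L)·L·Π_{j=1}^{n}(K_j·x_j(L)) and the dummy function δ(L) = L·Π_{j=1}^{n}(K_j'·x_j(L)) converge to finite limits as L → +∞, and both of these limits are strictly positive. -/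
/-! SRLK model with `n+1` trans-membrane chains `X_1, …, X_{n+1}` (indexed by
`Fin (n+1)`, so the paper's "`n ≥ 1` chains" corresponds to `n+1` here), an extrinsic
kinase `Z` with affinity `K0`, signalling affinities `K i`, dummy affinities `K' i`,
and total copy numbers `Nz` and `N i`. -/

/-- The signalling function `σ = K0·z·L·Π_j (K_j·x_j)`. -/
def srlkSigma (n : ℕ) (K0 : ℝ) (K : Fin (n+1) → ℝ) (z L : ℝ)
    (x : Fin (n+1) → ℝ) : ℝ :=
  K0 * z * L * ∏ j, (K j * x j)

/-- The dummy function `δ = L·Π_j (K'_j·x_j)`. -/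
def srlkDelta (n : ℕ) (K' : Fin (n+1) → ℝ) (L : ℝ) (x : Fin (n+1) → ℝ) : ℝ :=
  L * ∏ j, (K' j * x j)

/-- The SRLK steady-state equations at ligand concentration `L`. -/
def srlkSteady (n : ℕ) (K0 : ℝ) (K K' : Fin (n+1) → ℝ) (Nz : ℝ)
    (N : Fin (n+1) → ℝ) (L z : ℝ) (x : Fin (n+1) → ℝ) : Prop :=
  Nz = z + K0 * z * (x 0 + ∑ j ∈ Finset.Ioi (0 : Fin (n+1)),
      (∏ l ∈ Finset.Iio j, (K l * x l)) * x j) + srlkSigma n K0 K z L x ∧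
  N 0 = x 0 + (∑ j ∈ Finset.Ioi (0 : Fin (n+1)),
        (∏ l ∈ Finset.Iio j, (K' l * x l)) * x j)
      + srlkDelta n K' L x
      + K0 * z * (x 0 + ∑ j ∈ Finset.Ioi (0 : Fin (n+1)),
        (∏ l ∈ Finset.Iio j, (K l * x l)) * x j)
      + srlkSigma n K0 K z L x ∧
  ∀ i : Fin (n+1), 0 < i →
    N i = x i + (∑ j ∈ Finset.Ici i,
        ((∏ l ∈ Finset.Iio j, (K' l * x l)) * x j
          + K0 * z * (∏ l ∈ Finset.Iio j, (K l * x l)) * x j))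
      + srlkDelta n K' L x + srlkSigma n K0 K z L x

/-- An SRLK steady-state branch: continuous positive functions `z, x_1, …, x_{n+1}` on
`(0, ∞)` satisfying the SRLK steady-state equations for every `L > 0`, with
`z`, each `x_i`, `σ` and `δ` bounded and algebraic on `(0, ∞)`. -/
structure SRLKBranch (n : ℕ) (K0 : ℝ) (K K' : Fin (n+1) → ℝ) (Nz : ℝ)
    (N : Fin (n+1) → ℝ) (z : ℝ → ℝ) (x : Fin (n+1) → ℝ → ℝ) : Prop where
  contZ : ContinuousOn z (Set.Ioi 0)
  contX : ∀ i, ContinuousOn (x i) (Set.Ioi 0)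
  posZ : ∀ L : ℝ, 0 < L → 0 < z L
  posX : ∀ i, ∀ L : ℝ, 0 < L → 0 < x i L
  steady : ∀ L : ℝ, 0 < L → srlkSteady n K0 K K' Nz N L (z L) (fun i => x i L)
  bddZ : ∃ C : ℝ, ∀ L : ℝ, 0 < L → |z L| ≤ C
  bddX : ∀ i, ∃ C : ℝ, ∀ L : ℝ, 0 < L → |x i L| ≤ C
  bddSigma : ∃ C : ℝ, ∀ L : ℝ, 0 < L →
    |srlkSigma n K0 K (z L) L (fun i => x i L)| ≤ C
  bddDelta : ∃ C : ℝ, ∀ L : ℝ, 0 < L → |srlkDelta n K' L (fun i => x i L)| ≤ C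
  algZ : AlgebraicOnIoi z
  algX : ∀ i, AlgebraicOnIoi (x i)
  algSigma : AlgebraicOnIoi (fun L => srlkSigma n K0 K (z L) L (fun i => x i L))
  algDelta : AlgebraicOnIoi (fun L => srlkDelta n K' L (fun i => x i L))

open Filter Polynomial Finset in
theorem tendsto_of_bdd_alg {f : ℝ → ℝ} (hc : ContinuousOn f (Set.Ioi 0))
    (hb : ∃ C : ℝ, ∀ L : ℝ, 0 < L → |f L| ≤ C) (ha : AlgebraicOnIoi f) :
    ∃ c : ℝ, Filter.Tendsto f Filter.atTop (nhds c) := by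
  obtain ⟨C0, hC⟩ := hb
  have hbdd : ∀ᶠ L in atTop, |f L| ≤ C0 := by
    filter_upwards [eventually_gt_atTop 0] with L hL using hC L hL
  have hbl : IsBoundedUnder (· ≤ ·) atTop f :=
    ⟨C0, eventually_map.2 (by filter_upwards [hbdd] with L h using (abs_le.1 h).2)⟩
  have hbg : IsBoundedUnder (· ≥ ·) atTop f :=
    ⟨-C0, eventually_map.2 (by filter_upwards [hbdd] with L h using (abs_le.1 h).1)⟩
  set a := liminf f atTop with haa
  set b := limsup f atTop with hbb
  have hab : a ≤ b := liminf_le_limsup hbl hbg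
  rcases eq_or_lt_of_le hab with h | h
  · exact ⟨b, tendsto_of_liminf_eq_limsup h rfl hbl hbg⟩
  exfalso
  obtain ⟨m, hm, p, q, hq, heq⟩ := ha
  -- every c strictly between a and b is attained at arbitrarily large L
  have hattain : ∀ c : ℝ, a < c → c < b → ∀ M : ℝ, ∃ L, M < L ∧ 0 < L ∧ f L = c := by
    intro c hac hcb M
    have h1 : ∃ᶠ L in atTop, f L < c := frequently_lt_of_liminf_lt hbl.isCoboundedUnder_ge hac
    have h2 : ∃ᶠ L in atTop, c < f L := frequently_lt_of_lt_limsup hbg.isCoboundedUnder_le hcb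
    obtain ⟨L1, hL1M, hL1⟩ := ((eventually_gt_atTop (max M 1)).and_frequently h1).exists
    obtain ⟨L2, hL2M, hL2⟩ := ((eventually_gt_atTop (max M 1)).and_frequently h2).exists
    have hL1pos : (0:ℝ) < L1 := lt_of_lt_of_le one_pos (le_of_lt (lt_of_le_of_lt (le_max_right M 1) hL1M))
    have hL2pos : (0:ℝ) < L2 := lt_of_lt_of_le one_pos (le_of_lt (lt_of_le_of_lt (le_max_right M 1) hL2M))
    have hsub : Set.uIcc L1 L2 ⊆ Set.Ioi 0 := by
      intro t ht
      rcases Set.mem_uIcc.1 ht with ⟨h', _⟩ | ⟨h', _⟩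
      · exact lt_of_lt_of_le hL1pos h'
      · exact lt_of_lt_of_le hL2pos h'
    have := intermediate_value_uIcc (hc.mono hsub)
    have hcmem : c ∈ Set.uIcc (f L1) (f L2) := Set.mem_uIcc.2 (Or.inl ⟨le_of_lt hL1, le_of_lt hL2⟩)
    obtain ⟨L, hLmem, hfL⟩ := this hcmem
    refine ⟨L, ?_, hsub hLmem, hfL⟩
    have : min L1 L2 ≤ L := (Set.mem_uIcc.1 hLmem).elim (fun h => le_trans (min_le_left _ _) h.1)
      (fun h => le_trans (min_le_right _ _) h.1)
    exact lt_of_le_of_lt (le_max_left M 1)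
      (lt_of_lt_of_le (lt_min (lt_of_le_of_lt (le_refl _) hL1M) hL2M) this)
  -- the two-variable polynomial, as a family of polynomials in L
  set P : ℝ → Polynomial ℝ := fun c =>
    C (c ^ m) * ∏ j, q j + ∑ i : Fin m, C (c ^ (i : ℕ)) * (p i * ∏ j ∈ univ.erase i, q j)
    with hP
  have hPeval : ∀ c : ℝ, ∀ L : ℝ, 0 < L → f L = c → (P c).eval L = 0 := by
    intro c L hL hfL
    have hqe : ∀ i : Fin m, (q i).eval L ≠ 0 := fun i => hq i L hL
    have key : (P c).eval L =
        (∏ j, (q j).eval L) * (c ^ m + ∑ i : Fin m, (p i).eval L / (q i).eval L * c ^ (i : ℕ)) := by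
      rw [mul_add, Finset.mul_sum]
      simp only [hP, eval_add, eval_mul, eval_pow, eval_C, eval_finset_sum, eval_prod]
      congr 1
      · ring
      · refine Finset.sum_congr rfl fun i _ => ?_
        rw [← Finset.mul_prod_erase univ (fun j => (q j).eval L) (Finset.mem_univ i)]
        field_simp [hqe i]
    rw [key, ← hfL, heq L hL, mul_zero]
  have hPzero : ∀ c : ℝ, a < c → c < b → P c = 0 := by
    intro c hac hcb
    apply Polynomial.eq_zero_of_infinite_isRoot
    have hsub : {L : ℝ | 0 < L ∧ f L = c} ⊆ {L | (P c).IsRoot L} := by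
      intro L hL
      exact hPeval c L hL.1 hL.2
    refine Set.Infinite.mono hsub ?_
    intro hfin
    obtain ⟨M, hM⟩ := hfin.bddAbove
    obtain ⟨L, hML, hLpos, hfL⟩ := hattain c hac hcb M
    exact absurd (hM ⟨hLpos, hfL⟩) (not_le.2 hML)
  -- now the polynomial in c obtained by evaluating at L = 1
  set Q : Polynomial ℝ :=
    C ((∏ j, q j).eval 1) * X ^ m
      + ∑ i : Fin m, C ((p i * ∏ j ∈ univ.erase i, q j).eval 1) * X ^ (i : ℕ) with hQ
  have hQroot : ∀ c : ℝ, c ∈ Set.Ioo a b → Q.IsRoot c := by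
    intro c hc
    have h0 : (P c).eval 1 = 0 := by rw [hPzero c hc.1 hc.2]; simp
    have : Q.eval c = (P c).eval 1 := by
      simp only [hQ, hP, eval_add, eval_mul, eval_pow, eval_C, eval_X, eval_finset_sum, eval_prod]
      congr 1
      · ring
      · exact Finset.sum_congr rfl fun i _ => by ring
    simpa [IsRoot, this] using h0
  have hQ0 : Q = 0 :=
    Polynomial.eq_zero_of_infinite_isRoot _ (Set.Infinite.mono hQroot (Set.Ioo_infinite h))
  have hcoeff : Q.coeff m = (∏ j, q j).eval 1 := by
    simp only [hQ, coeff_add, coeff_C_mul, coeff_X_pow, if_pos rfl, if_true, mul_one,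
      Polynomial.finset_sum_coeff]
    rw [Finset.sum_eq_zero, add_zero]
    intro i _
    rw [if_neg (Ne.symm (Nat.ne_of_lt i.isLt)), mul_zero]
  have : (∏ j, q j).eval 1 ≠ 0 := by
    rw [eval_prod]
    exact Finset.prod_ne_zero_iff.2 fun i _ => hq i 1 one_pos
  rw [hQ0] at hcoeff
  simp at hcoeff
  exact this hcoeff.symm

/-- along any SRLK steady-state branch, the signalling and dummy
functions converge to finite, strictly positive limits as `L → +∞`. -/
theorem srlk_sigma_delta_positive_limits
    (n : ℕ) (K0 : ℝ) (K K' : Fin (n+1) → ℝ) (Nz : ℝ) (N : Fin (n+1) → ℝ)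
    (hK0 : 0 < K0) (hK : ∀ i, 0 < K i) (hK' : ∀ i, 0 < K' i)
    (hNz : 0 < Nz) (hN : ∀ i, 0 < N i)
    (z : ℝ → ℝ) (x : Fin (n+1) → ℝ → ℝ)
    (hbr : SRLKBranch n K0 K K' Nz N z x) :
    (∃ c : ℝ, 0 < c ∧
      Filter.Tendsto (fun L => srlkSigma n K0 K (z L) L (fun i => x i L))
        Filter.atTop (nhds c)) ∧
    (∃ c : ℝ, 0 < c ∧
      Filter.Tendsto (fun L => srlkDelta n K' L (fun i => x i L))
        Filter.atTop (nhds c)) := by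
  have hσcont : ContinuousOn (fun L => srlkSigma n K0 K (z L) L (fun i => x i L)) (Set.Ioi 0) := by
    simp only [srlkSigma]
    exact ((continuousOn_const.mul hbr.contZ).mul continuousOn_id).mul
      (continuousOn_finset_prod _ fun j _ => continuousOn_const.mul (hbr.contX j))
  have hδcont : ContinuousOn (fun L => srlkDelta n K' L (fun i => x i L)) (Set.Ioi 0) := by
    simp only [srlkDelta]
    exact continuousOn_id.mul
      (continuousOn_finset_prod _ fun j _ => continuousOn_const.mul (hbr.contX j))
  obtain ⟨s, hs⟩ := tendsto_of_bdd_alg hσcont hbr.bddSigma hbr.algSigma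
  obtain ⟨d, hd⟩ := tendsto_of_bdd_alg hδcont hbr.bddDelta hbr.algDelta
  obtain ⟨zl, hz⟩ := tendsto_of_bdd_alg hbr.contZ hbr.bddZ hbr.algZ
  choose xl hx using fun i => tendsto_of_bdd_alg (hbr.contX i) (hbr.bddX i) (hbr.algX i)
  have hσpos : ∀ L : ℝ, 0 < L → 0 < srlkSigma n K0 K (z L) L (fun i => x i L) := by
    intro L hL
    have hp : 0 < ∏ j, K j * x j L :=
      Finset.prod_pos fun j _ => mul_pos (hK j) (hbr.posX j L hL)
    exact mul_pos (mul_pos (mul_pos hK0 (hbr.posZ L hL)) hL) hp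
  have hδpos : ∀ L : ℝ, 0 < L → 0 < srlkDelta n K' L (fun i => x i L) := by
    intro L hL
    have hp : 0 < ∏ j, K' j * x j L :=
      Finset.prod_pos fun j _ => mul_pos (hK' j) (hbr.posX j L hL)
    exact mul_pos hL hp
  have hs0 : 0 ≤ s := ge_of_tendsto hs
    (by filter_upwards [Filter.eventually_gt_atTop 0] with L hL using (hσpos L hL).le)
  have hd0 : 0 ≤ d := ge_of_tendsto hd
    (by filter_upwards [Filter.eventually_gt_atTop 0] with L hL using (hδpos L hL).le)
  have const_eq : ∀ {g : ℝ → ℝ} {c e : ℝ}, (∀ L, 0 < L → c = g L) →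
      Filter.Tendsto g Filter.atTop (nhds e) → c = e := by
    intro g c e hce hg
    have h1 : Filter.Tendsto (fun _ : ℝ => c) Filter.atTop (nhds e) :=
      hg.congr' (by filter_upwards [Filter.eventually_gt_atTop 0] with L hL using (hce L hL).symm)
    exact (tendsto_nhds_unique h1 tendsto_const_nhds).symm
  -- limit of the bracket appearing in the Nz equation
  have hB : Filter.Tendsto
      (fun L => x 0 L + ∑ j ∈ Finset.Ioi (0 : Fin (n+1)),
        (∏ l ∈ Finset.Iio j, K l * x l L) * x j L)
      Filter.atTop
      (nhds (xl 0 + ∑ j ∈ Finset.Ioi (0 : Fin (n+1)),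
        (∏ l ∈ Finset.Iio j, K l * xl l) * xl j)) :=
    (hx 0).add (tendsto_finset_sum _ fun j _ =>
      (tendsto_finset_prod _ fun l _ => tendsto_const_nhds.mul (hx l)).mul (hx j))
  have hNzeq : Nz = zl + K0 * zl * (xl 0 + ∑ j ∈ Finset.Ioi (0 : Fin (n+1)),
      (∏ l ∈ Finset.Iio j, K l * xl l) * xl j) + s :=
    const_eq (fun L hL => (hbr.steady L hL).1)
      ((hz.add ((tendsto_const_nhds.mul hz).mul hB)).add hs)
  -- the product of the limits of the x's vanishes
  have hprodx : ∏ j, (K' j * xl j) = 0 := by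
    have h1 : Filter.Tendsto (fun L => ∏ j, K' j * x j L) Filter.atTop
        (nhds (∏ j, K' j * xl j)) :=
      tendsto_finset_prod _ fun j _ => tendsto_const_nhds.mul (hx j)
    have h3 : Filter.Tendsto (fun L => srlkDelta n K' L (fun i => x i L) * L⁻¹)
        Filter.atTop (nhds (d * 0)) := hd.mul tendsto_inv_atTop_zero
    rw [mul_zero] at h3
    have h2 : Filter.Tendsto (fun L => ∏ j, K' j * x j L) Filter.atTop (nhds 0) := by
      refine h3.congr' ?_
      filter_upwards [Filter.eventually_gt_atTop 0] with L hL
      show srlkDelta n K' L (fun i => x i L) * L⁻¹ = _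
      rw [srlkDelta, mul_comm L, mul_assoc, mul_inv_cancel₀ hL.ne', mul_one]
    exact tendsto_nhds_unique h1 h2
  obtain ⟨i, -, hKxi⟩ := Finset.prod_eq_zero_iff.1 hprodx
  have hxi0 : xl i = 0 := by
    rcases mul_eq_zero.1 hKxi with h | h
    · exact absurd h (ne_of_gt (hK' i))
    · exact h
  -- taking limits in the equation for N i gives N i = d + s
  have hNids : N i = d + s := by
    rcases eq_or_lt_of_le (Fin.zero_le i) with h0 | h0
    · subst h0
      have hlim : N 0 = xl 0 + (∑ j ∈ Finset.Ioi (0 : Fin (n+1)),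
            (∏ l ∈ Finset.Iio j, K' l * xl l) * xl j) + d
          + K0 * zl * (xl 0 + ∑ j ∈ Finset.Ioi (0 : Fin (n+1)),
            (∏ l ∈ Finset.Iio j, K l * xl l) * xl j) + s :=
        const_eq (fun L hL => (hbr.steady L hL).2.1)
          (((((hx 0).add (tendsto_finset_sum _ fun j _ =>
              (tendsto_finset_prod _ fun l _ => tendsto_const_nhds.mul (hx l)).mul
                (hx j))).add hd).add
            ((tendsto_const_nhds.mul hz).mul hB)).add hs)
      have hz1 : ∀ j ∈ Finset.Ioi (0 : Fin (n+1)),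
          (∏ l ∈ Finset.Iio j, K' l * xl l) * xl j = 0 := by
        intro j hj
        rw [Finset.prod_eq_zero (Finset.mem_Iio.2 (Finset.mem_Ioi.1 hj))
          (by rw [hxi0, mul_zero]), zero_mul]
      have hz2 : ∀ j ∈ Finset.Ioi (0 : Fin (n+1)),
          (∏ l ∈ Finset.Iio j, K l * xl l) * xl j = 0 := by
        intro j hj
        rw [Finset.prod_eq_zero (Finset.mem_Iio.2 (Finset.mem_Ioi.1 hj))
          (by rw [hxi0, mul_zero]), zero_mul]
      rw [Finset.sum_eq_zero hz1, Finset.sum_eq_zero hz2, hxi0] at hlim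
      simp at hlim
      linarith [hlim]
    · have hlim : N i = xl i + (∑ j ∈ Finset.Ici i,
            ((∏ l ∈ Finset.Iio j, K' l * xl l) * xl j
              + K0 * zl * (∏ l ∈ Finset.Iio j, K l * xl l) * xl j)) + d + s :=
        const_eq (fun L hL => (hbr.steady L hL).2.2 i h0)
          ((((hx i).add (tendsto_finset_sum _ fun j _ =>
              ((tendsto_finset_prod _ fun l _ => tendsto_const_nhds.mul (hx l)).mul
                (hx j)).add
              (((tendsto_const_nhds.mul hz).mul
                (tendsto_finset_prod _ fun l _ => tendsto_const_nhds.mul (hx l))).mul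
                (hx j)))).add hd).add hs)
      have hzero : ∀ j ∈ Finset.Ici i,
          ((∏ l ∈ Finset.Iio j, K' l * xl l) * xl j
            + K0 * zl * (∏ l ∈ Finset.Iio j, K l * xl l) * xl j) = 0 := by
        intro j hj
        rcases eq_or_lt_of_le (Finset.mem_Ici.1 hj) with h | h
        · rw [← h, hxi0]; ring
        · have h1 : (∏ l ∈ Finset.Iio j, K' l * xl l) = 0 :=
            Finset.prod_eq_zero (Finset.mem_Iio.2 h) (by rw [hxi0, mul_zero])
          have h2 : (∏ l ∈ Finset.Iio j, K l * xl l) = 0 :=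
            Finset.prod_eq_zero (Finset.mem_Iio.2 h) (by rw [hxi0, mul_zero])
          rw [h1, h2]; ring
      rw [Finset.sum_eq_zero hzero, hxi0] at hlim
      linarith [hlim]
  -- the key algebraic relation between σ, δ and z
  have hkey : s * ∏ j, K' j = (K0 * ∏ j, K j) * (zl * d) := by
    have hid : ∀ L : ℝ, srlkSigma n K0 K (z L) L (fun i => x i L) * ∏ j, K' j
        = (K0 * ∏ j, K j) * (z L * srlkDelta n K' L (fun i => x i L)) := by
      intro L
      simp only [srlkSigma, srlkDelta, Finset.prod_mul_distrib]
      ring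
    have h1 : Filter.Tendsto
        (fun L => srlkSigma n K0 K (z L) L (fun i => x i L) * ∏ j, K' j)
        Filter.atTop (nhds (s * ∏ j, K' j)) := hs.mul_const _
    have h2 : Filter.Tendsto
        (fun L => (K0 * ∏ j, K j) * (z L * srlkDelta n K' L (fun i => x i L)))
        Filter.atTop (nhds ((K0 * ∏ j, K j) * (zl * d))) :=
      tendsto_const_nhds.mul (hz.mul hd)
    exact tendsto_nhds_unique (h1.congr fun L => hid L) h2
  have hKpos : 0 < K0 * ∏ j, K j := mul_pos hK0 (Finset.prod_pos fun j _ => hK j)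
  have hK'pos : 0 < ∏ j, K' j := Finset.prod_pos fun j _ => hK' j
  have hspos : 0 < s := by
    rcases hs0.lt_or_eq with h | h
    · exact h
    · exfalso
      have hdNi : d = N i := by linarith [hNids]
      have h2 : zl * d = 0 := by
        have h3 : (K0 * ∏ j, K j) * (zl * d) = 0 := by rw [← hkey, ← h, zero_mul]
        rcases mul_eq_zero.1 h3 with h4 | h4
        · exact absurd h4 (ne_of_gt hKpos)
        · exact h4
      have hzl0 : zl = 0 := by
        rcases mul_eq_zero.1 h2 with h4 | h4
        · exact h4
        · exact absurd h4 (by rw [hdNi]; exact ne_of_gt (hN i))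
      rw [hzl0, ← h] at hNzeq
      simp at hNzeq
      exact absurd hNzeq (ne_of_gt hNz)
  have hdpos : 0 < d := by
    rcases hd0.lt_or_eq with h | h
    · exact h
    · exfalso
      have h1 : s * ∏ j, K' j = 0 := by rw [hkey, ← h, mul_zero, mul_zero]
      have h2 : 0 < s * ∏ j, K' j := mul_pos hspos hK'pos
      linarith
  exact ⟨⟨s, hspos, hs⟩, ⟨d, hdpos, hd⟩⟩
end

section
/- For any SRLK steady-state branch, the kinase concentration z(L) converges to a finite limit c_z as L → +∞, and c_z > 0. -/
open Filter Polynomial Set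

lemma tendsto_of_bounded_algebraic (f : ℝ → ℝ)
    (hcf : ContinuousOn f (Set.Ioi 0))
    (Cb : ℝ) (hb : ∀ L : ℝ, 0 < L → |f L| ≤ Cb)
    (ha : AlgebraicOnIoi f) :
    ∃ c : ℝ, Filter.Tendsto f Filter.atTop (nhds c) := by
  obtain ⟨m, hm, p, q, hq, heq⟩ := ha
  set A : Fin (m+1) → Polynomial ℝ :=
    Fin.snoc (fun i => p i * ∏ j ∈ Finset.univ.erase i, q j) (∏ j, q j) with hA
  have hQe : ∀ L : ℝ, 0 < L → (∏ j, q j).eval L ≠ 0 := by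
    intro L hL
    rw [Polynomial.eval_prod]
    exact Finset.prod_ne_zero_iff.2 fun i _ => hq i L hL
  have hQ0 : (∏ j, q j) ≠ 0 := fun h => hQe 1 one_pos (by rw [h, Polynomial.eval_zero])
  -- the polynomial relation with polynomial coefficients
  have hrel : ∀ L : ℝ, 0 < L → ∑ i : Fin (m+1), (A i).eval L * f L ^ (i : ℕ) = 0 := by
    intro L hL
    have h2 : (∏ j, q j).eval L *
        (f L ^ m + ∑ i : Fin m, ((p i).eval L / (q i).eval L) * f L ^ (i : ℕ))
        = ∑ i : Fin (m+1), (A i).eval L * f L ^ (i : ℕ) := by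
      rw [Fin.sum_univ_castSucc]
      simp only [hA, Fin.snoc_castSucc, Fin.snoc_last, Fin.val_last, Fin.coe_castSucc]
      rw [mul_add, Finset.mul_sum, add_comm]
      congr 1
      apply Finset.sum_congr rfl
      intro i _
      rw [Polynomial.eval_mul, Polynomial.eval_prod, Polynomial.eval_prod,
        ← Finset.mul_prod_erase Finset.univ (fun j => (q j).eval L) (Finset.mem_univ i)]
      field_simp [hq i L hL]
    rw [← h2, heq L hL, mul_zero]
  set d : ℕ := Finset.univ.sup (fun i : Fin (m+1) => (A i).natDegree) with hd
  set CP : Polynomial ℝ :=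
    ∑ i : Fin (m+1), Polynomial.C ((A i).coeff d) * Polynomial.X ^ (i : ℕ) with hCP
  have hCPcoeff : ∀ i : Fin (m+1), CP.coeff (i : ℕ) = (A i).coeff d := by
    intro i
    rw [hCP, Polynomial.finset_sum_coeff]
    rw [Finset.sum_eq_single i]
    · simp
    · intro b _ hbne
      simp only [Polynomial.coeff_C_mul, Polynomial.coeff_X_pow]
      rw [if_neg (by simpa [Fin.val_eq_val] using (Ne.symm hbne)), mul_zero]
    · simp
  have hCPeval : ∀ y : ℝ, CP.eval y = ∑ i : Fin (m+1), (A i).coeff d * y ^ (i : ℕ) := by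
    intro y; rw [hCP]; simp [Polynomial.eval_finset_sum]
  have hCP0 : CP ≠ 0 := by
    obtain ⟨i1, _, hi1⟩ := Finset.exists_mem_eq_sup Finset.univ
      (Finset.univ_nonempty) (fun i : Fin (m+1) => (A i).natDegree)
    by_cases hA1 : A i1 = 0
    · have hd0 : d = 0 := by rw [hd, hi1, hA1, Polynomial.natDegree_zero]
      have hQd : (A (Fin.last m)).natDegree = 0 := by
        have h := Finset.le_sup (f := fun i : Fin (m+1) => (A i).natDegree)
          (Finset.mem_univ (Fin.last m))
        rw [← hd, hd0] at h
        exact Nat.le_zero.mp (by simpa using h)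
      have hAl : A (Fin.last m) ≠ 0 := by
        rw [hA, Fin.snoc_last]; exact hQ0
      intro h
      have := hCPcoeff (Fin.last m)
      rw [h, Polynomial.coeff_zero, hd0, ← hQd, Polynomial.coeff_natDegree] at this
      exact hAl (Polynomial.leadingCoeff_eq_zero.1 this.symm)
    · intro h
      have := hCPcoeff i1
      rw [h, Polynomial.coeff_zero, hd, hi1, Polynomial.coeff_natDegree] at this
      exact hA1 (Polynomial.leadingCoeff_eq_zero.1 this.symm)
  -- the limit of CP.eval (f L) is 0
  set Cb' : ℝ := max Cb 1 with hCb'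
  set M : ℝ := ∑ i : Fin (m+1), ∑ j ∈ Finset.range d, |(A i).coeff j| * Cb' ^ (i : ℕ)
    with hM
  have hkey : ∀ L : ℝ, 1 ≤ L → |CP.eval (f L)| ≤ M / L := by
    intro L hL1
    have hLpos : (0:ℝ) < L := lt_of_lt_of_le one_pos hL1
    have hev : ∀ i : Fin (m+1), (A i).eval L =
        (∑ j ∈ Finset.range d, (A i).coeff j * L ^ j) + (A i).coeff d * L ^ d := by
      intro i
      have h := Finset.le_sup (f := fun i : Fin (m+1) => (A i).natDegree)
        (Finset.mem_univ i)
      rw [← hd] at h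
      rw [Polynomial.eval_eq_sum_range' (Nat.lt_succ_of_le h), Finset.sum_range_succ]
    have h0 : (∑ i : Fin (m+1), (∑ j ∈ Finset.range d, (A i).coeff j * L ^ j)
        * f L ^ (i:ℕ)) + L ^ d * CP.eval (f L) = 0 := by
      rw [hCPeval, Finset.mul_sum, ← Finset.sum_add_distrib, ← hrel L hLpos]
      apply Finset.sum_congr rfl
      intro i _
      rw [hev i]; ring
    have hsum : L ^ d * CP.eval (f L) =
        -(∑ i : Fin (m+1), (∑ j ∈ Finset.range d, (A i).coeff j * L ^ j) * f L ^ (i:ℕ)) := by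
      linarith
    have hb1 : |f L| ≤ Cb' := le_trans (hb L hLpos) (le_max_left _ _)
    have habs : |∑ i : Fin (m+1), (∑ j ∈ Finset.range d, (A i).coeff j * L ^ j)
        * f L ^ (i:ℕ)| ≤ M * (L ^ d / L) := by
      refine le_trans (Finset.abs_sum_le_sum_abs _ _) ?_
      rw [hM, Finset.sum_mul]
      refine Finset.sum_le_sum fun i _ => ?_
      rw [abs_mul, Finset.sum_mul]
      refine le_trans (mul_le_mul_of_nonneg_right (Finset.abs_sum_le_sum_abs _ _)
        (abs_nonneg _)) ?_
      rw [Finset.sum_mul]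
      refine Finset.sum_le_sum fun j hj => ?_
      rw [abs_mul, abs_pow, abs_pow]
      have h1 : |L| ^ j ≤ L ^ d / L := by
        rw [abs_of_pos hLpos, le_div_iff₀ hLpos, ← pow_succ]
        exact pow_le_pow_right₀ hL1 (Finset.mem_range.1 hj)
      have h2 : |f L| ^ (i:ℕ) ≤ Cb' ^ (i:ℕ) := pow_le_pow_left₀ (abs_nonneg _) hb1 _
      calc |(A i).coeff j| * |L| ^ j * |f L| ^ (i:ℕ)
          ≤ |(A i).coeff j| * (L ^ d / L) * Cb' ^ (i:ℕ) := by
            apply mul_le_mul (mul_le_mul_of_nonneg_left h1 (abs_nonneg _)) h2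
              (pow_nonneg (abs_nonneg _) _) (by positivity)
        _ = |(A i).coeff j| * Cb' ^ (i:ℕ) * (L ^ d / L) := by ring
    have hLd : (0:ℝ) < L ^ d := pow_pos hLpos d
    have hfin : L ^ d * |CP.eval (f L)| ≤ M * (L ^ d / L) := by
      have h2 : |L ^ d * CP.eval (f L)| ≤ M * (L ^ d / L) := by
        rw [hsum, abs_neg]; exact habs
      rwa [abs_mul, abs_of_pos hLd] at h2
    calc |CP.eval (f L)| = (L ^ d * |CP.eval (f L)|) / L ^ d := by field_simp
      _ ≤ (M * (L ^ d / L)) / L ^ d := by gcongr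
      _ = M / L := by field_simp
  have htend : Tendsto (fun L => CP.eval (f L)) atTop (nhds 0) := by
    apply squeeze_zero_norm' (a := fun L => M / L)
    · filter_upwards [eventually_ge_atTop (1:ℝ)] with L hL
      simpa [Real.norm_eq_abs] using hkey L hL
    · exact Tendsto.div_atTop tendsto_const_nhds tendsto_id
  have hclus_root : ∀ c : ℝ, MapClusterPt c atTop f → CP.eval c = 0 := by
    intro c hc
    have h1 : (nhds c ⊓ map f atTop).NeBot := mapClusterPt_def.1 hc
    have h2 : Tendsto (fun y => CP.eval y) (nhds c) (nhds (CP.eval c)) :=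
      (Polynomial.continuous CP).continuousAt.tendsto
    have h3 : map (fun y => CP.eval y) (nhds c ⊓ map f atTop) ≤
        nhds (CP.eval c) ⊓ nhds 0 := by
      refine le_inf (le_trans (map_mono inf_le_left) h2) ?_
      refine le_trans (map_mono inf_le_right) ?_
      rw [Filter.map_map]
      exact htend
    exact eq_of_nhds_neBot (Filter.neBot_of_le h3)
  have hmem : ∀ᶠ L in atTop, f L ∈ Icc (-Cb) Cb := by
    filter_upwards [eventually_gt_atTop (0:ℝ)] with L hL
    exact abs_le.1 (hb L hL)
  have hmap : map f atTop ≤ Filter.principal (Icc (-Cb) Cb) :=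
    le_principal_iff.2 hmem
  obtain ⟨c, -, hc⟩ := isCompact_Icc.exists_clusterPt hmap
  have hcc : MapClusterPt c atTop f := mapClusterPt_def.2 hc
  -- no two distinct cluster points
  have hpair : ∀ a b : ℝ, MapClusterPt a atTop f → MapClusterPt b atTop f →
      a < b → False := by
    intro a b ha hb' hab
    have hroots : {y : ℝ | CP.IsRoot y}.Finite := Polynomial.finite_setOf_isRoot hCP0
    obtain ⟨y, hy1, hy2⟩ : ∃ y, y ∈ Ioo a b ∧ CP.eval y ≠ 0 := by
      by_contra hcon
      push_neg at hcon
      have hsub : Set.Ioo a b ⊆ {y : ℝ | CP.IsRoot y} := fun y hy => hcon y hy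
      exact (Set.infinite_coe_iff.1 (Set.Ioo.infinite hab)) (hroots.subset hsub)
    have hyc : MapClusterPt y atTop f := by
      rw [mapClusterPt_iff_frequently]
      intro s hs
      rw [frequently_atTop]
      intro M0
      obtain ⟨L1, hL1M, hL1⟩ := frequently_atTop.1
        ((mapClusterPt_iff_frequently.1 ha) (Set.Iio y) (Iio_mem_nhds hy1.1)) (max M0 1)
      obtain ⟨L2, hL2M, hL2⟩ := frequently_atTop.1
        ((mapClusterPt_iff_frequently.1 hb') (Set.Ioi y) (Ioi_mem_nhds hy1.2)) (max M0 1)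
      have hsub : Set.uIcc L1 L2 ⊆ Set.Ioi (0:ℝ) := by
        intro t ht
        have h1 : min L1 L2 ≤ t := (Set.mem_uIcc.1 ht).elim
          (fun h => le_trans (min_le_left _ _) h.1)
          (fun h => le_trans (min_le_right _ _) h.1)
        have : (1:ℝ) ≤ min L1 L2 :=
          le_min (le_trans (le_max_right _ _) hL1M) (le_trans (le_max_right _ _) hL2M)
        exact lt_of_lt_of_le one_pos (le_trans this h1)
      have hcont : ContinuousOn f (Set.uIcc L1 L2) := hcf.mono hsub
      have hyin : y ∈ Set.uIcc (f L1) (f L2) :=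
        Set.mem_uIcc.2 (Or.inl ⟨le_of_lt hL1, le_of_lt hL2⟩)
      obtain ⟨t, ht, hfty⟩ := intermediate_value_uIcc hcont hyin
      refine ⟨t, ?_, ?_⟩
      · have h1 : min L1 L2 ≤ t := (Set.mem_uIcc.1 ht).elim
          (fun h => le_trans (min_le_left _ _) h.1)
          (fun h => le_trans (min_le_right _ _) h.1)
        have : M0 ≤ min L1 L2 :=
          le_min (le_trans (le_max_left _ _) hL1M) (le_trans (le_max_left _ _) hL2M)
        exact le_trans this h1
      · rw [hfty]; exact mem_of_mem_nhds hs
    exact hy2 (hclus_root y hyc)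
  have huniq : ∀ a : ℝ, MapClusterPt a atTop f → a = c := by
    intro a ha
    rcases lt_trichotomy a c with h | h | h
    · exact absurd (hpair a c ha hcc h) (by simp)
    · exact h
    · exact absurd (hpair c a hcc ha h) (by simp)
  refine ⟨c, ?_⟩
  rw [Metric.tendsto_nhds]
  by_contra hnot
  push_neg at hnot
  obtain ⟨eps, heps, hfreq⟩ := hnot
  simp only [← not_lt] at hfreq
  set G : Filter ℝ := atTop ⊓ Filter.principal {L | ¬ dist (f L) c < eps} with hG
  haveI hGne : G.NeBot := Filter.frequently_iff_neBot.1 hfreq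
  set S : Set ℝ := Icc (-Cb) Cb ∩ {y | eps ≤ dist y c} with hS
  have hScomp : IsCompact S := isCompact_Icc.inter_right
    (isClosed_le continuous_const (continuous_id.dist continuous_const))
  have hmapG : map f G ≤ Filter.principal S := by
    rw [le_principal_iff, Filter.mem_map]
    have h1 : {L : ℝ | f L ∈ Icc (-Cb) Cb} ∈ G :=
      Filter.mem_of_superset (Filter.mem_inf_of_left hmem) (by intro t ht; exact ht)
    have h2 : {L : ℝ | eps ≤ dist (f L) c} ∈ G := by
      refine Filter.mem_of_superset (Filter.mem_inf_of_right (Filter.mem_principal_self _)) ?_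
      intro t ht
      exact not_lt.1 ht
    filter_upwards [h1, h2] with L hL1 hL2
    exact ⟨hL1, hL2⟩
  haveI : (map f G).NeBot := Filter.map_neBot
  obtain ⟨a, haS, hacl⟩ := hScomp.exists_clusterPt hmapG
  have haf : MapClusterPt a atTop f :=
    mapClusterPt_def.2 (hacl.mono (map_mono inf_le_left))
  have : a = c := huniq a haf
  rw [this] at haS
  have : eps ≤ dist c c := haS.2
  rw [dist_self] at this
  linarith

/-- along any SRLK steady-state branch, the kinase concentration `z`
converges to a finite, strictly positive limit as `L → +∞`. -/
theorem srlk_kinase_positive_limit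
    (n : ℕ) (K0 : ℝ) (K K' : Fin (n+1) → ℝ) (Nz : ℝ) (N : Fin (n+1) → ℝ)
    (hK0 : 0 < K0) (hK : ∀ i, 0 < K i) (hK' : ∀ i, 0 < K' i)
    (hNz : 0 < Nz) (hN : ∀ i, 0 < N i)
    (z : ℝ → ℝ) (x : Fin (n+1) → ℝ → ℝ)
    (hbr : SRLKBranch n K0 K K' Nz N z x) :
    ∃ cz : ℝ, 0 < cz ∧ Filter.Tendsto z Filter.atTop (nhds cz) := by
  classical
  obtain ⟨Cz, hCz⟩ := hbr.bddZ
  obtain ⟨cz, hcz⟩ := tendsto_of_bounded_algebraic z hbr.contZ Cz hCz hbr.algZ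
  refine ⟨cz, ?_, hcz⟩
  have hcz_nonneg : 0 ≤ cz := by
    refine ge_of_tendsto hcz ?_
    filter_upwards [Filter.eventually_gt_atTop (0:ℝ)] with L hL
    exact (hbr.posZ L hL).le
  rcases hcz_nonneg.lt_or_eq with h | h
  · exact h
  exfalso
  -- from now on cz = 0, derive a contradiction
  choose Cx hCx using hbr.bddX
  have hCx0 : ∀ i, 0 ≤ Cx i :=
    fun i => le_trans (abs_nonneg _) (hCx i 1 one_pos)
  set PK : ℝ := ∏ j, K j with hPK
  set PK' : ℝ := ∏ j, K' j with hPK'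
  have hPKpos : 0 < PK := Finset.prod_pos fun j _ => hK j
  have hPK'pos : 0 < PK' := Finset.prod_pos fun j _ => hK' j
  set Cs : ℝ := Cx 0 + ∑ j ∈ Finset.Ioi (0 : Fin (n+1)),
    (∏ l ∈ Finset.Iio j, (K l * Cx l)) * Cx j with hCs
  have hCs0 : 0 ≤ Cs := by
    refine add_nonneg (hCx0 0) (Finset.sum_nonneg fun j _ => mul_nonneg
      (Finset.prod_nonneg fun l _ => mul_nonneg (hK l).le (hCx0 l)) (hCx0 j))
  have hden : 0 < 1 + K0 * Cs := by positivity
  set e1 : ℝ := Nz / (2 * (1 + K0 * Cs)) with he1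
  set e2 : ℝ := Nz * PK' / (2 * (N 0 + 1) * K0 * PK) with he2
  have hN0 : 0 < N 0 := hN 0
  have he1pos : 0 < e1 := by positivity
  have he2pos : 0 < e2 := by positivity
  have heps : 0 < min e1 e2 := lt_min he1pos he2pos
  have hev : ∀ᶠ L in Filter.atTop, z L < min e1 e2 := by
    rw [← h] at hcz
    exact hcz.eventually_lt_const heps
  obtain ⟨L, hL0, hLe⟩ := (Filter.eventually_gt_atTop (0:ℝ)).and hev |>.exists
  -- now work at this L
  obtain ⟨eq1, eq2, -⟩ := hbr.steady L hL0
  set xx : Fin (n+1) → ℝ := fun i => x i L with hxx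
  set sig : ℝ := srlkSigma n K0 K (z L) L xx with hsig
  set del : ℝ := srlkDelta n K' L xx with hdel
  have hxpos : ∀ i, 0 < xx i := fun i => hbr.posX i L hL0
  have hzpos : 0 < z L := hbr.posZ L hL0
  have hxle : ∀ i, xx i ≤ Cx i := fun i => le_of_abs_le (hCx i L hL0)
  have hsigpos : 0 < sig := by
    rw [hsig, srlkSigma]
    exact mul_pos (mul_pos (mul_pos hK0 hzpos) hL0)
      (Finset.prod_pos fun j _ => mul_pos (hK j) (hxpos j))
  have hdelpos : 0 < del := by
    rw [hdel, srlkDelta]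
    exact mul_pos hL0 (Finset.prod_pos fun j _ => mul_pos (hK' j) (hxpos j))
  set SL : ℝ := xx 0 + ∑ j ∈ Finset.Ioi (0 : Fin (n+1)),
    (∏ l ∈ Finset.Iio j, (K l * xx l)) * xx j with hSL
  have hSLpos : 0 < SL := by
    refine add_pos_of_pos_of_nonneg (hxpos 0) (Finset.sum_nonneg fun j _ => mul_nonneg
      (Finset.prod_nonneg fun l _ => (mul_pos (hK l) (hxpos l)).le) (hxpos j).le)
  have hSLle : SL ≤ Cs := by
    rw [hSL, hCs]
    refine add_le_add (hxle 0) (Finset.sum_le_sum fun j _ => ?_)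
    refine mul_le_mul (Finset.prod_le_prod
      (fun l _ => (mul_pos (hK l) (hxpos l)).le)
      (fun l _ => mul_le_mul_of_nonneg_left (hxle l) (hK l).le))
      (hxle j) (hxpos j).le
      (Finset.prod_nonneg fun l _ => mul_nonneg (hK l).le (hCx0 l))
  -- equation 1 : Nz = z L + K0 * z L * SL + sig
  have heq1 : Nz = z L + K0 * z L * SL + sig := eq1
  -- equation 2 gives del ≤ N 0
  have hsum2 : 0 ≤ ∑ j ∈ Finset.Ioi (0 : Fin (n+1)),
      (∏ l ∈ Finset.Iio j, (K' l * xx l)) * xx j :=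
    Finset.sum_nonneg fun j _ => mul_nonneg
      (Finset.prod_nonneg fun l _ => (mul_pos (hK' l) (hxpos l)).le) (hxpos j).le
  have hdelle : del ≤ N 0 := by
    have heq2 : N 0 = xx 0 + (∑ j ∈ Finset.Ioi (0 : Fin (n+1)),
        (∏ l ∈ Finset.Iio j, (K' l * xx l)) * xx j) + del + K0 * z L * SL + sig := eq2
    linarith [hxpos 0, hsum2, mul_pos (mul_pos hK0 hzpos) hSLpos, hsigpos, heq2]
  -- the key identity linking del and sig
  have hkeyid : del * (K0 * z L * PK) = sig * PK' := by
    rw [hdel, hsig, srlkDelta, srlkSigma, hPK, hPK',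
      Finset.prod_mul_distrib, Finset.prod_mul_distrib]
    ring
  clear_value PK PK' Cs e1 e2 xx sig del SL
  -- bounds
  have hz1 : z L < e1 := lt_of_lt_of_le hLe (min_le_left _ _)
  have hz2 : z L < e2 := lt_of_lt_of_le hLe (min_le_right _ _)
  have hsig_lb : Nz / 2 < sig := by
    have h1 : z L * (1 + K0 * Cs) < e1 * (1 + K0 * Cs) :=
      mul_lt_mul_of_pos_right hz1 hden
    have h2 : e1 * (1 + K0 * Cs) = Nz / 2 := by
      rw [he1]; field_simp
    have hexp : z L * (1 + K0 * Cs) = z L + K0 * z L * Cs := by ring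
    have h3 : K0 * z L * SL ≤ K0 * z L * Cs :=
      mul_le_mul_of_nonneg_left hSLle (mul_pos hK0 hzpos).le
    have t1 : sig = Nz - z L - K0 * z L * SL := by linarith [heq1]
    have t2 : z L * (1 + K0 * Cs) < Nz / 2 := by linarith [h1, h2]
    linarith [t1, t2, hexp, h3]
  have hc1 : (N 0 + 1) * (K0 * z L * PK) < Nz * PK' / 2 := by
    have h1 : z L * ((N 0 + 1) * K0 * PK) < e2 * ((N 0 + 1) * K0 * PK) :=
      mul_lt_mul_of_pos_right hz2
        (mul_pos (mul_pos (by linarith) hK0) hPKpos)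
    have h2 : e2 * ((N 0 + 1) * K0 * PK) = Nz * PK' / 2 := by
      rw [he2]; field_simp
    have hexp : (N 0 + 1) * (K0 * z L * PK) = z L * ((N 0 + 1) * K0 * PK) := by ring
    linarith
  have hfinal : sig * PK' ≤ N 0 * (K0 * z L * PK) := by
    rw [← hkeyid]
    exact mul_le_mul_of_nonneg_right hdelle
      (mul_pos (mul_pos hK0 hzpos) hPKpos).le
  have ht : 0 < K0 * z L * PK := mul_pos (mul_pos hK0 hzpos) hPKpos
  have hsplit : (N 0 + 1) * (K0 * z L * PK)
      = N 0 * (K0 * z L * PK) + K0 * z L * PK := by ring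
  have hhalf : Nz * PK' / 2 = Nz / 2 * PK' := by ring
  have hm1 : Nz / 2 * PK' < sig * PK' := mul_lt_mul_of_pos_right hsig_lb hPK'pos
  linarith
end

section
/- Fix an integer n ≥ 1 and positive real parameters K_0, K_1, …, K_n, K_1', …, K_n', N_z, N_1, …, N_n with no allostery, i.e. K_i = K_i' for all i = 1, …, n. If positive reals z, x_1, …, x_n satisfy the SRLK steady-state equations at some ligand concentration L > 0, then K_0·z² + (1 + K_0·(N_1 − N_z))·z − N_z = 0, and consequently z = (−1 + K_0·(N_z − N_1) + √((1 + K_0·(N_1 − N_z))² + 4·K_0·N_z))/(2·K_0); in particular the value of z does not depend on L. -/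
/-- in an SRLK model with no allostery (`K_i = K_i'`), the kinase
concentration at any positive steady state satisfies an `L`-independent quadratic and
is given by the explicit formula; in particular it does not depend on `L`. -/
theorem srlk_no_allostery_kinase_formula
    (n : ℕ) (K0 : ℝ) (K K' : Fin (n+1) → ℝ) (Nz : ℝ) (N : Fin (n+1) → ℝ)
    (hK0 : 0 < K0) (hK : ∀ i, 0 < K i) (hK' : ∀ i, 0 < K' i)
    (hNz : 0 < Nz) (hN : ∀ i, 0 < N i)
    (hna : ∀ i, K i = K' i)
    (L z : ℝ) (x : Fin (n+1) → ℝ)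
    (hL : 0 < L) (hz : 0 < z) (hx : ∀ i, 0 < x i)
    (hss : srlkSteady n K0 K K' Nz N L z x) :
    K0*z^2 + (1 + K0*(N 0 - Nz))*z - Nz = 0 ∧
    z = (-1 + K0*(Nz - N 0)
          + Real.sqrt ((1 + K0*(N 0 - Nz))^2 + 4*K0*Nz)) / (2*K0) := by
  have hKK' : K' = K := funext fun i => (hna i).symm
  subst hKK'
  obtain ⟨h1, h2, -⟩ := hss
  simp only [srlkSigma, srlkDelta] at h1 h2
  have hq : K0*z^2 + (1 + K0*(N 0 - Nz))*z - Nz = 0 := by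
    rw [h1, h2]; ring
  refine ⟨hq, ?_⟩
  set b : ℝ := 1 + K0*(N 0 - Nz) with hb
  have key : (2*K0*z + b)^2 = b^2 + 4*K0*Nz := by linear_combination (4*K0) * hq
  have hpos : 0 < 2*K0*z + b := by nlinarith [hq, mul_pos hK0 (mul_pos hz hz)]
  have hsqrt : Real.sqrt ((1 + K0*(N 0 - Nz))^2 + 4*K0*Nz) = 2*K0*z + b := by
    rw [← hb, ← key]; exact Real.sqrt_sq hpos.le
  rw [hsqrt]
  field_simp
  ring
end

section
/- Consider an SRLK steady-state branch with a unique limiting component, i.e. there is an index i0 ∈ {1, …, n} such that N_{i0} < N_i for all i ≠ i0. Then there exists a constant c_{i0} > 0 such that L·x_{i0}(L) → c_{i0} as L → +∞, and for every i ∈ {1, …, n} with i ≠ i0 there exists a constant c_i > 0 such that x_i(L) → c_i as L → +∞. -/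
open Filter

open Filter Polynomial in
theorem alg_bounded_tendsto {f : ℝ → ℝ} (hc : ContinuousOn f (Set.Ioi 0))
    (hb : ∃ C, ∀ L : ℝ, 0 < L → |f L| ≤ C) (ha : AlgebraicOnIoi f) :
    ∃ c : ℝ, Tendsto f atTop (nhds c) := by
  obtain ⟨C, hC⟩ := hb
  obtain ⟨m, hm, p, q, hq, heq⟩ := ha
  have hbd : ∀ᶠ L in atTop, |f L| ≤ C :=
    (eventually_gt_atTop 0).mono fun L hL => hC L hL
  have hle : IsBoundedUnder (· ≤ ·) atTop f :=
    ⟨C, hbd.mono fun L h => (abs_le.1 h).2⟩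
  have hge : IsBoundedUnder (· ≥ ·) atTop f :=
    ⟨-C, hbd.mono fun L h => (abs_le.1 h).1⟩
  set a := liminf f atTop with ha'
  set b := limsup f atTop with hb'
  rcases eq_or_lt_of_le (liminf_le_limsup hle hge) with hab | hab
  · exact ⟨b, tendsto_of_liminf_eq_limsup hab rfl hle hge⟩
  -- contradiction case
  exfalso
  set Q : Polynomial ℝ := ∏ i, q i with hQ
  have hQe : ∀ L : ℝ, 0 < L → Q.eval L ≠ 0 := by
    intro L hL
    rw [hQ, Polynomial.eval_prod]
    exact Finset.prod_ne_zero_iff.2 fun i _ => hq i L hL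
  set A : ℝ → Polynomial ℝ := fun c =>
    Q * Polynomial.C (c ^ m) +
      ∑ i : Fin m, (p i * ∏ j ∈ Finset.univ.erase i, q j) * Polynomial.C (c ^ (i : ℕ))
    with hA
  have hAeval : ∀ c L : ℝ, (A c).eval L =
      Q.eval L * c ^ m + ∑ i : Fin m,
        (p i).eval L * (∏ j ∈ Finset.univ.erase i, q j).eval L * c ^ (i : ℕ) := by
    intro c L
    simp [hA, Polynomial.eval_finset_sum]
  have hroot : ∀ L : ℝ, 0 < L → (A (f L)).eval L = 0 := by
    intro L hL
    rw [hAeval]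
    have h0 := heq L hL
    have : Q.eval L * (f L ^ m + ∑ i : Fin m, ((p i).eval L / (q i).eval L) * f L ^ (i : ℕ)) = 0 := by
      rw [h0]; ring
    rw [mul_add, Finset.mul_sum] at this
    rw [← this]
    congr 1
    apply Finset.sum_congr rfl
    intro i _
    have hqi : (q i).eval L ≠ 0 := hq i L hL
    have hsplit : Q.eval L = (q i).eval L * (∏ j ∈ Finset.univ.erase i, q j).eval L := by
      rw [hQ, Polynomial.eval_prod, Polynomial.eval_prod, ← Finset.mul_prod_erase _ _ (Finset.mem_univ i)]
    rw [hsplit]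
    field_simp
  -- for c in (a,b), the polynomial A c vanishes identically
  have hAzero : ∀ c ∈ Set.Ioo a b, A c = 0 := by
    intro c hcab
    apply Polynomial.eq_zero_of_infinite_isRoot
    have hunb : ∀ M : ℝ, ∃ L, M < L ∧ 0 < L ∧ f L = c := by
      intro M
      have h1 : ∃ᶠ L in atTop, f L < c :=
        frequently_lt_of_liminf_lt hle.isCoboundedUnder_ge hcab.1
      have h2 : ∃ᶠ L in atTop, c < f L :=
        frequently_lt_of_lt_limsup hge.isCoboundedUnder_le hcab.2
      obtain ⟨L1, hL1, hfL1⟩ := (h1.and_eventually (eventually_gt_atTop (max M 0))).exists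
      obtain ⟨L2, hL2, hL2'⟩ := (h2.and_eventually (eventually_gt_atTop L1)).exists
      have hL1pos : 0 < L1 := lt_of_le_of_lt (le_max_right M 0) hfL1
      have hsub : Set.Icc L1 L2 ⊆ Set.Ioi 0 := fun t ht => lt_of_lt_of_le hL1pos ht.1
      have := intermediate_value_Icc (le_of_lt hL2') (hc.mono hsub)
      have hcmem : c ∈ Set.Icc (f L1) (f L2) := ⟨le_of_lt hL1, le_of_lt hL2⟩
      obtain ⟨L, hLmem, hfL⟩ := this hcmem
      exact ⟨L, lt_of_le_of_lt (le_max_left M 0) (lt_of_lt_of_le hfL1 hLmem.1),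
        lt_of_lt_of_le hL1pos hLmem.1, hfL⟩
    apply Set.infinite_of_not_bddAbove
    intro ⟨M, hM⟩
    obtain ⟨L, hML, hLpos, hfL⟩ := hunb M
    have : (A c).IsRoot L := by
      have := hroot L hLpos; rwa [hfL] at this
    exact absurd (hM this) (not_le.2 hML)
  -- transfer to a one-variable polynomial at L = 1
  set B : Polynomial ℝ := Polynomial.C (Q.eval 1) * Polynomial.X ^ m +
      ∑ i : Fin m, Polynomial.C ((p i).eval 1 * (∏ j ∈ Finset.univ.erase i, q j).eval 1) *
        Polynomial.X ^ (i : ℕ) with hB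
  have hBeval : ∀ c : ℝ, B.eval c = (A c).eval 1 := by
    intro c
    rw [hAeval]
    simp [hB, Polynomial.eval_finset_sum]
  have hBzero : B = 0 := by
    apply Polynomial.eq_zero_of_infinite_isRoot
    apply Set.Infinite.mono (s := Set.Ioo a b)
    · intro c hcab
      show B.IsRoot c
      rw [Polynomial.IsRoot, hBeval, hAzero c hcab]
      simp
    · exact Set.Ioo_infinite hab
  have hcoeff : B.coeff m = Q.eval 1 := by
    rw [hB]
    rw [Polynomial.coeff_add, Polynomial.coeff_C_mul, Polynomial.coeff_X_pow]
    rw [Polynomial.finset_sum_coeff]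
    have : ∀ i : Fin m, (Polynomial.C ((p i).eval 1 * (∏ j ∈ Finset.univ.erase i, q j).eval 1) *
        Polynomial.X ^ (i : ℕ)).coeff m = 0 := by
      intro i
      rw [Polynomial.coeff_C_mul, Polynomial.coeff_X_pow, if_neg (Nat.ne_of_lt' i.isLt)]
      ring
    rw [Finset.sum_eq_zero fun i _ => this i]
    simp
  rw [hBzero] at hcoeff
  simp at hcoeff
  exact hQe 1 one_pos hcoeff.symm

/-- along any SRLK steady-state branch with a unique limiting component
`X_{i0}`, one has `L·x_{i0}(L) → c_{i0} > 0`, and every other `x_i` tends to a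
strictly positive constant, as `L → +∞`. -/
theorem srlk_unique_limiting_component
    (n : ℕ) (K0 : ℝ) (K K' : Fin (n+1) → ℝ) (Nz : ℝ) (N : Fin (n+1) → ℝ)
    (hK0 : 0 < K0) (hK : ∀ i, 0 < K i) (hK' : ∀ i, 0 < K' i)
    (hNz : 0 < Nz) (hN : ∀ i, 0 < N i)
    (z : ℝ → ℝ) (x : Fin (n+1) → ℝ → ℝ)
    (hbr : SRLKBranch n K0 K K' Nz N z x)
    (i0 : Fin (n+1)) (hlim : ∀ i, i ≠ i0 → N i0 < N i) :
    (∃ c : ℝ, 0 < c ∧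
      Filter.Tendsto (fun L : ℝ => L * x i0 L) Filter.atTop (nhds c)) ∧
    (∀ i, i ≠ i0 → ∃ c : ℝ, 0 < c ∧
      Filter.Tendsto (x i) Filter.atTop (nhds c)) := by
  -- limits of z, x, σ, δ at +∞
  obtain ⟨zs, hz⟩ := alg_bounded_tendsto hbr.contZ hbr.bddZ hbr.algZ
  choose xs hxs using fun i => alg_bounded_tendsto (hbr.contX i) (hbr.bddX i) (hbr.algX i)
  have hcd : ContinuousOn (fun L => srlkDelta n K' L (fun i => x i L)) (Set.Ioi 0) := by
    unfold srlkDelta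
    exact continuousOn_id.mul (continuousOn_finset_prod _ fun j _ =>
      (continuousOn_const.mul (hbr.contX j)))
  have hcs : ContinuousOn (fun L => srlkSigma n K0 K (z L) L (fun i => x i L)) (Set.Ioi 0) := by
    unfold srlkSigma
    exact ((continuousOn_const.mul hbr.contZ).mul continuousOn_id).mul
      (continuousOn_finset_prod _ fun j _ => (continuousOn_const.mul (hbr.contX j)))
  obtain ⟨ds, hd⟩ := alg_bounded_tendsto hcd hbr.bddDelta hbr.algDelta
  obtain ⟨ss, hs⟩ := alg_bounded_tendsto hcs hbr.bddSigma hbr.algSigma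
  have hev : ∀ᶠ L in atTop, (0:ℝ) < L := eventually_gt_atTop 0
  have hxs0 : ∀ i, 0 ≤ xs i := fun i =>
    ge_of_tendsto (hxs i) (hev.mono fun L hL => (hbr.posX i L hL).le)
  have hzs0 : 0 ≤ zs := ge_of_tendsto hz (hev.mono fun L hL => (hbr.posZ L hL).le)
  -- the product of all (K' j * xs j) vanishes
  have hprodlim : Tendsto (fun L => ∏ j, (K' j * x j L)) atTop (nhds (∏ j, (K' j * xs j))) :=
    tendsto_finset_prod _ fun j _ => tendsto_const_nhds.mul (hxs j)
  have hprod0 : (∏ j, (K' j * xs j)) = 0 := by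
    have h2 : Tendsto (fun L => srlkDelta n K' L (fun i => x i L) * L⁻¹) atTop (nhds (ds * 0)) :=
      hd.mul tendsto_inv_atTop_zero
    have h3 : (fun L => srlkDelta n K' L (fun i => x i L) * L⁻¹) =ᶠ[atTop]
        (fun L => ∏ j, (K' j * x j L)) := by
      filter_upwards [hev] with L hL
      field_simp [srlkDelta]
      rfl
    rw [mul_zero] at h2
    exact tendsto_nhds_unique hprodlim (h2.congr' h3)
  obtain ⟨j0, _, hj0⟩ := Finset.prod_eq_zero_iff.1 hprod0
  have hxj0 : xs j0 = 0 := by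
    rcases mul_eq_zero.1 hj0 with h | h
    · exact absurd h (hK' j0).ne'
    · exact h
  -- pointwise lower bound : δ + σ ≤ N i  for every i
  have hlow : ∀ i, ds + ss ≤ N i := by
    intro i
    have hpt : ∀ᶠ L in atTop, srlkDelta n K' L (fun j => x j L)
        + srlkSigma n K0 K (z L) L (fun j => x j L) ≤ N i := by
      filter_upwards [hev] with L hL
      obtain ⟨-, h0, hi⟩ := hbr.steady L hL
      have hxpos : ∀ j, (0:ℝ) ≤ x j L := fun j => (hbr.posX j L hL).le
      have hzpos : (0:ℝ) ≤ z L := (hbr.posZ L hL).le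
      rcases eq_or_lt_of_le (Fin.zero_le i) with h | h
      · rw [← h, h0]
        have s1 : (0:ℝ) ≤ ∑ j ∈ Finset.Ioi (0 : Fin (n+1)),
            (∏ l ∈ Finset.Iio j, (K' l * x l L)) * x j L :=
          Finset.sum_nonneg fun j _ => mul_nonneg
            (Finset.prod_nonneg fun l _ => mul_nonneg (hK' l).le (hxpos l)) (hxpos j)
        have s2 : (0:ℝ) ≤ ∑ j ∈ Finset.Ioi (0 : Fin (n+1)),
            (∏ l ∈ Finset.Iio j, (K l * x l L)) * x j L :=
          Finset.sum_nonneg fun j _ => mul_nonneg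
            (Finset.prod_nonneg fun l _ => mul_nonneg (hK l).le (hxpos l)) (hxpos j)
        have : (0:ℝ) ≤ K0 * z L * (x 0 L + ∑ j ∈ Finset.Ioi (0 : Fin (n+1)),
            (∏ l ∈ Finset.Iio j, (K l * x l L)) * x j L) :=
          mul_nonneg (mul_nonneg hK0.le hzpos) (add_nonneg (hxpos 0) s2)
        nlinarith [hxpos 0, s1]
      · rw [hi i h]
        have s1 : (0:ℝ) ≤ ∑ j ∈ Finset.Ici i,
            ((∏ l ∈ Finset.Iio j, (K' l * x l L)) * x j L
              + K0 * z L * (∏ l ∈ Finset.Iio j, (K l * x l L)) * x j L) :=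
          Finset.sum_nonneg fun j _ => add_nonneg
            (mul_nonneg (Finset.prod_nonneg fun l _ =>
              mul_nonneg (hK' l).le (hxpos l)) (hxpos j))
            (mul_nonneg (mul_nonneg (mul_nonneg hK0.le hzpos)
              (Finset.prod_nonneg fun l _ => mul_nonneg (hK l).le (hxpos l))) (hxpos j))
        nlinarith [hxpos i]
    exact le_of_tendsto (hd.add hs) hpt
  -- limit equation : if xs i = 0 then N i = ds + ss
  have hlimeq : ∀ i : Fin (n+1), xs i = 0 → N i = ds + ss := by
    intro i hxi
    rcases eq_or_lt_of_le (Fin.zero_le i) with h | h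
    · -- i = 0
      subst h
      have hrhs : Tendsto (fun L => x 0 L + (∑ j ∈ Finset.Ioi (0 : Fin (n+1)),
            (∏ l ∈ Finset.Iio j, (K' l * x l L)) * x j L)
          + srlkDelta n K' L (fun j => x j L)
          + K0 * z L * (x 0 L + ∑ j ∈ Finset.Ioi (0 : Fin (n+1)),
            (∏ l ∈ Finset.Iio j, (K l * x l L)) * x j L)
          + srlkSigma n K0 K (z L) L (fun j => x j L)) atTop
          (nhds (xs 0 + (∑ j ∈ Finset.Ioi (0 : Fin (n+1)),
            (∏ l ∈ Finset.Iio j, (K' l * xs l)) * xs j)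
          + ds + K0 * zs * (xs 0 + ∑ j ∈ Finset.Ioi (0 : Fin (n+1)),
            (∏ l ∈ Finset.Iio j, (K l * xs l)) * xs j) + ss)) := by
        refine ((((hxs 0).add (tendsto_finset_sum _ fun j _ =>
          (tendsto_finset_prod _ fun l _ => tendsto_const_nhds.mul (hxs l)).mul (hxs j))).add
          hd).add (((tendsto_const_nhds.mul hz).mul ((hxs 0).add
            (tendsto_finset_sum _ fun j _ => (tendsto_finset_prod _ fun l _ =>
              tendsto_const_nhds.mul (hxs l)).mul (hxs j)))))).add hs
      have heq : N 0 = xs 0 + (∑ j ∈ Finset.Ioi (0 : Fin (n+1)),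
            (∏ l ∈ Finset.Iio j, (K' l * xs l)) * xs j)
          + ds + K0 * zs * (xs 0 + ∑ j ∈ Finset.Ioi (0 : Fin (n+1)),
            (∏ l ∈ Finset.Iio j, (K l * xs l)) * xs j) + ss := by
        refine tendsto_nhds_unique (l := atTop) ?_ hrhs
        refine Tendsto.congr' ?_ (tendsto_const_nhds (x := N 0))
        filter_upwards [hev] with L hL
        exact (hbr.steady L hL).2.1
      have z1 : ∀ j ∈ Finset.Ioi (0 : Fin (n+1)),
          (∏ l ∈ Finset.Iio j, (K' l * xs l)) * xs j = 0 := by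
        intro j hj
        rw [Finset.prod_eq_zero (Finset.mem_Iio.2 (Finset.mem_Ioi.1 hj))
          (by rw [hxi, mul_zero]), zero_mul]
      have z2 : ∀ j ∈ Finset.Ioi (0 : Fin (n+1)),
          (∏ l ∈ Finset.Iio j, (K l * xs l)) * xs j = 0 := by
        intro j hj
        rw [Finset.prod_eq_zero (Finset.mem_Iio.2 (Finset.mem_Ioi.1 hj))
          (by rw [hxi, mul_zero]), zero_mul]
      rw [heq, Finset.sum_eq_zero z1, Finset.sum_eq_zero z2, hxi]
      ring
    · -- 0 < i
      have hrhs : Tendsto (fun L => x i L + (∑ j ∈ Finset.Ici i,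
            ((∏ l ∈ Finset.Iio j, (K' l * x l L)) * x j L
              + K0 * z L * (∏ l ∈ Finset.Iio j, (K l * x l L)) * x j L))
          + srlkDelta n K' L (fun j => x j L)
          + srlkSigma n K0 K (z L) L (fun j => x j L)) atTop
          (nhds (xs i + (∑ j ∈ Finset.Ici i,
            ((∏ l ∈ Finset.Iio j, (K' l * xs l)) * xs j
              + K0 * zs * (∏ l ∈ Finset.Iio j, (K l * xs l)) * xs j)) + ds + ss)) := by
        refine (((hxs i).add (tendsto_finset_sum _ fun j _ => ?_)).add hd).add hs
        exact ((tendsto_finset_prod _ fun l _ => tendsto_const_nhds.mul (hxs l)).mul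
            (hxs j)).add (((tendsto_const_nhds.mul hz).mul
            (tendsto_finset_prod _ fun l _ => tendsto_const_nhds.mul (hxs l))).mul (hxs j))
      have heq : N i = xs i + (∑ j ∈ Finset.Ici i,
            ((∏ l ∈ Finset.Iio j, (K' l * xs l)) * xs j
              + K0 * zs * (∏ l ∈ Finset.Iio j, (K l * xs l)) * xs j)) + ds + ss := by
        refine tendsto_nhds_unique (l := atTop) ?_ hrhs
        refine Tendsto.congr' ?_ (tendsto_const_nhds (x := N i))
        filter_upwards [hev] with L hL
        exact (hbr.steady L hL).2.2 i h
      have z1 : ∀ j ∈ Finset.Ici i,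
          (∏ l ∈ Finset.Iio j, (K' l * xs l)) * xs j
            + K0 * zs * (∏ l ∈ Finset.Iio j, (K l * xs l)) * xs j = 0 := by
        intro j hj
        rcases eq_or_lt_of_le (Finset.mem_Ici.1 hj) with hji | hji
        · rw [← hji, hxi, mul_zero, mul_zero, add_zero]
        · rw [Finset.prod_eq_zero (Finset.mem_Iio.2 hji) (by rw [hxi, mul_zero]),
            Finset.prod_eq_zero (Finset.mem_Iio.2 hji) (by rw [hxi, mul_zero])]
          ring
      rw [heq, Finset.sum_eq_zero z1, hxi]
      ring
  -- every xs i with i ≠ i0 is positive, and xs i0 = 0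
  have hxpos' : ∀ i, i ≠ i0 → 0 < xs i := by
    intro i hi
    rcases eq_or_lt_of_le (hxs0 i) with h | h
    · exfalso
      have h1 := hlimeq i h.symm
      have h2 := hlow i0
      have := hlim i hi
      linarith
    · exact h
  have hxi0 : xs i0 = 0 := by
    by_cases h : j0 = i0
    · rwa [h] at hxj0
    · exact absurd hxj0 (hxpos' j0 h).ne'
  -- δ limit is positive
  have hNi0 : N i0 = ds + ss := hlimeq i0 hxi0
  have hds0 : 0 ≤ ds := ge_of_tendsto hd (hev.mono fun L hL => by
    have := hbr.posX
    have hp : 0 < srlkDelta n K' L (fun j => x j L) := by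
      unfold srlkDelta
      exact mul_pos hL (Finset.prod_pos fun j _ => mul_pos (hK' j) (hbr.posX j L hL))
    exact hp.le)
  have hrel : ss * (∏ j, K' j) = K0 * zs * (∏ j, K j) * ds := by
    have hptw : ∀ᶠ L in atTop, srlkSigma n K0 K (z L) L (fun j => x j L) * (∏ j, K' j)
        = K0 * z L * (∏ j, K j) * srlkDelta n K' L (fun j => x j L) := by
      filter_upwards [hev] with L hL
      unfold srlkSigma srlkDelta
      rw [Finset.prod_mul_distrib, Finset.prod_mul_distrib]
      ring
    exact tendsto_nhds_unique ((hs.mul tendsto_const_nhds).congr' hptw)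
      (((tendsto_const_nhds.mul hz).mul tendsto_const_nhds).mul hd)
  have hdspos : 0 < ds := by
    rcases eq_or_lt_of_le hds0 with h | h
    · exfalso
      have hK'prod : (0:ℝ) < ∏ j, K' j := Finset.prod_pos fun j _ => hK' j
      have hss : ss = 0 := by
        have h2 := hrel
        rw [← h, mul_zero] at h2
        rcases mul_eq_zero.1 h2 with h1 | h1
        · exact h1
        · exact absurd h1 hK'prod.ne'
      have := hN i0
      rw [hNi0, ← h, hss] at this
      linarith
    · exact h
  constructor
  · -- L * x i0 L tends to ds / (K' i0 * ∏_{j ≠ i0} (K' j * xs j))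
    set D : ℝ := K' i0 * ∏ j ∈ Finset.univ.erase i0, (K' j * xs j) with hD
    have hDpos : 0 < D := by
      apply mul_pos (hK' i0)
      exact Finset.prod_pos fun j hj =>
        mul_pos (hK' j) (hxpos' j (Finset.mem_erase.1 hj).1)
    have hden : Tendsto (fun L => K' i0 * ∏ j ∈ Finset.univ.erase i0, (K' j * x j L))
        atTop (nhds D) :=
      tendsto_const_nhds.mul (tendsto_finset_prod _ fun j _ =>
        tendsto_const_nhds.mul (hxs j))
    have hquot : Tendsto (fun L => srlkDelta n K' L (fun j => x j L)
        / (K' i0 * ∏ j ∈ Finset.univ.erase i0, (K' j * x j L))) atTop (nhds (ds / D)) :=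
      hd.div hden hDpos.ne'
    refine ⟨ds / D, div_pos hdspos hDpos, ?_⟩
    refine hquot.congr' ?_
    filter_upwards [hev] with L hL
    have hdenL : (0:ℝ) < K' i0 * ∏ j ∈ Finset.univ.erase i0, (K' j * x j L) :=
      mul_pos (hK' i0) (Finset.prod_pos fun j _ => mul_pos (hK' j) (hbr.posX j L hL))
    rw [eq_comm, eq_div_iff hdenL.ne']
    unfold srlkDelta
    rw [← Finset.mul_prod_erase _ _ (Finset.mem_univ i0)]
    ring
  · intro i hi
    exact ⟨xs i, hxpos' i hi, hxs i⟩
end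

section
/- Consider an SRLK steady-state branch whose limiting components are indexed by a subset I ⊆ {1, …, n} of cardinality r ≥ 1, i.e. there is N° > 0 with N_i = N° for all i ∈ I and N_i > N° for all i ∉ I. Then for each i ∈ I there exists a constant c_i > 0 such that L^{1/r}·x_i(L) → c_i as L → +∞, and for each i ∈ {1, …, n} with i ∉ I there exists a constant c_i > 0 such that x_i(L) → c_i as L → +∞. -/
open Filter Polynomial Set

lemma exists_tendsto_of_alg (f : ℝ → ℝ) (hc : ContinuousOn f (Set.Ioi 0))
    (B : ℝ) (hb : ∀ L : ℝ, 0 < L → |f L| ≤ B) (ha : AlgebraicOnIoi f) :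
    ∃ c, Filter.Tendsto f Filter.atTop (nhds c) := by
  have hub : Filter.IsBoundedUnder (· ≤ ·) atTop f :=
    ⟨B, eventually_atTop.2 ⟨1, fun L hL =>
      le_trans (le_abs_self _) (hb L (by linarith))⟩⟩
  have hlb : Filter.IsBoundedUnder (· ≥ ·) atTop f := by
    refine ⟨-B, eventually_atTop.2 ⟨1, fun L hL => ?_⟩⟩
    have h1 := hb L (by linarith)
    have h2 := neg_abs_le (f L)
    simpa using by linarith
  set a := Filter.liminf f atTop with ha'
  set b := Filter.limsup f atTop with hb'
  rcases eq_or_lt_of_le (Filter.liminf_le_limsup hub hlb) with hab | hab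
  · exact ⟨b, tendsto_of_liminf_eq_limsup hab rfl hub hlb⟩
  exfalso
  obtain ⟨m, hm, p, q, hq, heq⟩ := ha
  set g : ℝ → Polynomial ℝ := fun y =>
    Polynomial.C (y ^ m) * ∏ i, q i +
      ∑ i : Fin m, Polynomial.C (y ^ (i : ℕ)) *
        (p i * ∏ k ∈ Finset.univ.erase i, q k) with hg
  have hgeval : ∀ y L : ℝ, 0 < L → f L = y → (g y).eval L = 0 := by
    intro y L hL hfL
    have h0 := heq L hL
    rw [hfL] at h0
    have key : (y ^ m + ∑ i : Fin m, (p i).eval L / (q i).eval L * y ^ (i : ℕ)) *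
        ∏ k, (q k).eval L = 0 := by rw [h0, zero_mul]
    rw [add_mul, Finset.sum_mul] at key
    simp only [hg, eval_add, eval_mul, eval_C, eval_finset_sum, eval_prod]
    rw [← key]
    congr 1
    refine Finset.sum_congr rfl fun i _ => ?_
    rw [← Finset.mul_prod_erase Finset.univ (fun k => (q k).eval L) (Finset.mem_univ i)]
    field_simp [hq i L hL]
  have hattain : ∀ y ∈ Set.Ioo a b, ∀ M : ℝ, ∃ L, M ≤ L ∧ 0 < L ∧ f L = y := by
    rintro y ⟨hay, hyb⟩ M
    obtain ⟨L1, hfL1, hL1⟩ :=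
      ((Filter.frequently_lt_of_liminf_lt hub.isCoboundedUnder_ge hay).and_eventually
        (eventually_ge_atTop (max M 1))).exists
    obtain ⟨L2, hfL2, hL2⟩ :=
      ((Filter.frequently_lt_of_lt_limsup hlb.isCoboundedUnder_le hyb).and_eventually
        (eventually_ge_atTop (max M 1))).exists
    have h1 : (1:ℝ) ≤ L1 := le_trans (le_max_right M 1) hL1
    have h2 : (1:ℝ) ≤ L2 := le_trans (le_max_right M 1) hL2
    rcases le_total L1 L2 with hle | hle
    · have hsub : Set.Icc L1 L2 ⊆ Set.Ioi 0 := fun t ht =>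
        lt_of_lt_of_le one_pos (le_trans h1 ht.1)
      obtain ⟨L, hLmem, hfLy⟩ := intermediate_value_Icc hle (hc.mono hsub)
        ⟨le_of_lt hfL1, le_of_lt hfL2⟩
      exact ⟨L, le_trans (le_trans (le_max_left M 1) hL1) hLmem.1,
        lt_of_lt_of_le one_pos (le_trans h1 hLmem.1), hfLy⟩
    · have hsub : Set.Icc L2 L1 ⊆ Set.Ioi 0 := fun t ht =>
        lt_of_lt_of_le one_pos (le_trans h2 ht.1)
      obtain ⟨L, hLmem, hfLy⟩ := intermediate_value_Icc' hle (hc.mono hsub)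
        ⟨le_of_lt hfL1, le_of_lt hfL2⟩
      exact ⟨L, le_trans (le_trans (le_max_left M 1) hL2) hLmem.1,
        lt_of_lt_of_le one_pos (le_trans h2 hLmem.1), hfLy⟩
  -- g y = 0 for each y in (a,b)
  have hg0 : ∀ y ∈ Set.Ioo a b, g y = 0 := by
    intro y hy
    apply Polynomial.eq_zero_of_infinite_isRoot
    have hSinf : {L : ℝ | 0 < L ∧ f L = y}.Infinite := by
      intro hfin
      obtain ⟨Mb, hMb⟩ := hfin.bddAbove
      obtain ⟨L, hML, hL0, hfLy⟩ := hattain y hy (Mb + 1)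
      have := hMb ⟨hL0, hfLy⟩
      linarith
    exact hSinf.mono fun L hL => hgeval y L hL.1 hL.2
  -- evaluate at L = 1 to get a polynomial in y vanishing on (a,b)
  set H : Polynomial ℝ :=
    Polynomial.C (∏ i, (q i).eval 1) * X ^ m +
      ∑ i : Fin m, Polynomial.C ((p i).eval 1 *
        ∏ k ∈ Finset.univ.erase i, (q k).eval 1) * X ^ (i : ℕ) with hH
  have hHeval : ∀ y ∈ Set.Ioo a b, H.eval y = 0 := by
    intro y hy
    have hEq : H.eval y = (g y).eval 1 := by
      simp only [hH, hg, eval_add, eval_mul, eval_C, eval_finset_sum, eval_prod,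
        eval_pow, eval_X]
      congr 1
      · exact mul_comm _ _
      · exact Finset.sum_congr rfl fun i _ => by ring
    rw [hEq, hg0 y hy, eval_zero]
  have hH0 : H = 0 := by
    apply Polynomial.eq_zero_of_infinite_isRoot
    have : (Set.Ioo a b).Infinite := Set.Ioo_infinite hab
    exact this.mono fun y hy => hHeval y hy
  have hcoeff : H.coeff m = ∏ i, (q i).eval 1 := by
    simp only [hH, coeff_add, Polynomial.finset_sum_coeff, coeff_C_mul, coeff_X_pow]
    rw [Finset.sum_eq_zero fun i _ => by
      rw [if_neg (Nat.ne_of_gt i.2), mul_zero]]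
    simp
  rw [hH0, coeff_zero] at hcoeff
  have : ∏ i, (q i).eval 1 ≠ 0 :=
    Finset.prod_ne_zero_iff.2 fun i _ => hq i 1 one_pos
  exact this hcoeff.symm

/-- along any SRLK steady-state branch whose limiting components form a
set `I` of cardinality `r ≥ 1`, one has `L^(1/r)·x_i(L) → c_i > 0` for `i ∈ I`, and
every `x_i` with `i ∉ I` tends to a strictly positive constant, as `L → +∞`. -/
theorem srlk_multiple_limiting_components
    (n : ℕ) (K0 : ℝ) (K K' : Fin (n+1) → ℝ) (Nz : ℝ) (N : Fin (n+1) → ℝ)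
    (hK0 : 0 < K0) (hK : ∀ i, 0 < K i) (hK' : ∀ i, 0 < K' i)
    (hNz : 0 < Nz) (hN : ∀ i, 0 < N i)
    (z : ℝ → ℝ) (x : Fin (n+1) → ℝ → ℝ)
    (hbr : SRLKBranch n K0 K K' Nz N z x)
    (I : Finset (Fin (n+1))) (hne : I.Nonempty)
    (N0 : ℝ) (hN0 : 0 < N0)
    (hIeq : ∀ i ∈ I, N i = N0) (hIgt : ∀ i ∉ I, N0 < N i) :
    (∀ i ∈ I, ∃ c : ℝ, 0 < c ∧
      Filter.Tendsto (fun L : ℝ => L ^ ((1 : ℝ) / (I.card : ℝ)) * x i L)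
        Filter.atTop (nhds c)) ∧
    (∀ i ∉ I, ∃ c : ℝ, 0 < c ∧
      Filter.Tendsto (x i) Filter.atTop (nhds c)) := by
  classical
  set σf : ℝ → ℝ := fun L => srlkSigma n K0 K (z L) L (fun i => x i L) with hσf
  set δf : ℝ → ℝ := fun L => srlkDelta n K' L (fun i => x i L) with hδf
  obtain ⟨ζ, hζ⟩ : ∃ c, Tendsto z atTop (nhds c) := by
    obtain ⟨B, hB⟩ := hbr.bddZ
    exact exists_tendsto_of_alg z hbr.contZ B hB hbr.algZ
  have hξex : ∀ i, ∃ c, Tendsto (x i) atTop (nhds c) := fun i => by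
    obtain ⟨B, hB⟩ := hbr.bddX i
    exact exists_tendsto_of_alg _ (hbr.contX i) B hB (hbr.algX i)
  choose ξ hξ using hξex
  have hcontprod : ∀ (g : Fin (n+1) → ℝ),
      ContinuousOn (fun L => ∏ j, (g j * x j L)) (Set.Ioi 0) :=
    fun g => continuousOn_finset_prod _ fun j _ =>
      continuousOn_const.mul (hbr.contX j)
  obtain ⟨d, hδ⟩ : ∃ c, Tendsto δf atTop (nhds c) := by
    obtain ⟨B, hB⟩ := hbr.bddDelta
    exact exists_tendsto_of_alg δf (continuousOn_id.mul (hcontprod K')) B hB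
      hbr.algDelta
  obtain ⟨s, hσ⟩ : ∃ c, Tendsto σf atTop (nhds c) := by
    obtain ⟨B, hB⟩ := hbr.bddSigma
    exact exists_tendsto_of_alg σf
      (((continuousOn_const.mul hbr.contZ).mul continuousOn_id).mul (hcontprod K))
      B hB hbr.algSigma
  have hev : ∀ᶠ L : ℝ in atTop, (0:ℝ) < L := eventually_gt_atTop 0
  have hξ0 : ∀ i, 0 ≤ ξ i := fun i =>
    ge_of_tendsto (hξ i) (hev.mono fun L hL => (hbr.posX i L hL).le)
  have hζ0 : 0 ≤ ζ :=
    ge_of_tendsto hζ (hev.mono fun L hL => (hbr.posZ L hL).le)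
  -- master equation
  set P : Fin (n+1) → ℝ → ℝ := fun j L =>
    (∏ l ∈ Finset.Iio j, (K' l * x l L)) * x j L
      + K0 * z L * ((∏ l ∈ Finset.Iio j, (K l * x l L)) * x j L) with hP
  set w : Fin (n+1) → ℝ → ℝ := fun i L =>
    1 + K0 * z L * ∏ l ∈ Finset.Iio i, (K l * x l L)
      + (if i = 0 then 0 else ∏ l ∈ Finset.Iio i, (K' l * x l L)) with hw
  have hIci : ∀ i : Fin (n+1), Finset.Ici i = insert i (Finset.Ioi i) := by
    intro i
    ext b
    simp [Finset.mem_Ici, Finset.mem_Ioi, le_iff_lt_or_eq, eq_comm, or_comm]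
  have hPalt : ∀ (t : Finset (Fin (n+1))) (L : ℝ),
      (∑ j ∈ t, ((∏ l ∈ Finset.Iio j, (K' l * x l L)) * x j L
        + K0 * z L * (∏ l ∈ Finset.Iio j, (K l * x l L)) * x j L))
      = ∑ j ∈ t, P j L :=
    fun t L => Finset.sum_congr rfl fun j _ => by simp only [hP]; ring
  have hME : ∀ i : Fin (n+1), ∀ L : ℝ, 0 < L →
      N i = x i L * w i L + (∑ j ∈ Finset.Ioi i, P j L) + δf L + σf L := by
    intro i L hL
    obtain ⟨h1, h2, h3⟩ := hbr.steady L hL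
    rcases eq_or_ne i 0 with rfl | hi0
    · have hIio0 : Finset.Iio (0 : Fin (n+1)) = ∅ := by ext a; simp
      have hsum : ∑ j ∈ Finset.Ioi (0 : Fin (n+1)), P j L
          = (∑ j ∈ Finset.Ioi (0 : Fin (n+1)),
              (∏ l ∈ Finset.Iio j, (K' l * x l L)) * x j L)
            + K0 * z L * ∑ j ∈ Finset.Ioi (0 : Fin (n+1)),
              (∏ l ∈ Finset.Iio j, (K l * x l L)) * x j L := by
        simp only [hP]
        rw [Finset.mul_sum, ← Finset.sum_add_distrib]
      rw [h2, hsum]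
      simp only [hw, hIio0, Finset.prod_empty, reduceIte, hσf, hδf]
      ring
    · have hpos : 0 < i := Fin.pos_iff_ne_zero.2 hi0
      rw [h3 i hpos, hIci i, Finset.sum_insert (by simp), hPalt]
      simp only [hw, hP, if_neg hi0, hσf, hδf]
      ring
  -- limits of P j and w i
  have hprodlim : ∀ (g : Fin (n+1) → ℝ) (t : Finset (Fin (n+1))),
      Tendsto (fun L => ∏ l ∈ t, (g l * x l L)) atTop
        (nhds (∏ l ∈ t, (g l * ξ l))) :=
    fun g t => tendsto_finset_prod _ fun l _ => tendsto_const_nhds.mul (hξ l)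
  set Pb : Fin (n+1) → ℝ := fun j =>
    (∏ l ∈ Finset.Iio j, (K' l * ξ l)) * ξ j
      + K0 * ζ * ((∏ l ∈ Finset.Iio j, (K l * ξ l)) * ξ j) with hPb
  have hPlim : ∀ j, Tendsto (P j) atTop (nhds (Pb j)) := fun j =>
    ((hprodlim K' _).mul (hξ j)).add
      ((tendsto_const_nhds.mul hζ).mul ((hprodlim K _).mul (hξ j)))
  set Wb : Fin (n+1) → ℝ := fun i =>
    1 + K0 * ζ * ∏ l ∈ Finset.Iio i, (K l * ξ l)
      + (if i = 0 then 0 else ∏ l ∈ Finset.Iio i, (K' l * ξ l)) with hWb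
  have hwlim : ∀ i, Tendsto (w i) atTop (nhds (Wb i)) := by
    intro i
    refine (tendsto_const_nhds.add
      ((tendsto_const_nhds.mul hζ).mul (hprodlim K _))).add ?_
    rcases eq_or_ne i 0 with rfl | hi0
    · simp only [if_pos rfl]; exact tendsto_const_nhds
    · simp only [if_neg hi0]; exact hprodlim K' _
  have hLE : ∀ i : Fin (n+1),
      N i = ξ i * Wb i + (∑ j ∈ Finset.Ioi i, Pb j) + d + s := by
    intro i
    have hT : Tendsto (fun L => x i L * w i L + (∑ j ∈ Finset.Ioi i, P j L)
        + δf L + σf L) atTop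
        (nhds (ξ i * Wb i + (∑ j ∈ Finset.Ioi i, Pb j) + d + s)) :=
      ((((hξ i).mul (hwlim i)).add
        (tendsto_finset_sum _ fun j _ => hPlim j)).add hδ).add hσ
    have hT' : Tendsto (fun L => x i L * w i L + (∑ j ∈ Finset.Ioi i, P j L)
        + δf L + σf L) atTop (nhds (N i)) := by
      refine Tendsto.congr' ?_ tendsto_const_nhds
      filter_upwards [hev] with L hL
      exact hME i L hL
    exact tendsto_nhds_unique hT' hT
  have hWb1 : ∀ i, 1 ≤ Wb i := by
    intro i
    have h1 : 0 ≤ K0 * ζ * ∏ l ∈ Finset.Iio i, (K l * ξ l) :=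
      mul_nonneg (mul_nonneg hK0.le hζ0)
        (Finset.prod_nonneg fun l _ => mul_nonneg (hK l).le (hξ0 l))
    have h2 : 0 ≤ (if i = 0 then 0 else ∏ l ∈ Finset.Iio i, (K' l * ξ l)) := by
      split
      · exact le_refl 0
      · exact Finset.prod_nonneg fun l _ => mul_nonneg (hK' l).le (hξ0 l)
    simp only [hWb]
    linarith
  have hPb0 : ∀ j, 0 ≤ Pb j := by
    intro j
    have h1 : 0 ≤ (∏ l ∈ Finset.Iio j, (K' l * ξ l)) :=
      Finset.prod_nonneg fun l _ => mul_nonneg (hK' l).le (hξ0 l)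
    have h2 : 0 ≤ (∏ l ∈ Finset.Iio j, (K l * ξ l)) :=
      Finset.prod_nonneg fun l _ => mul_nonneg (hK l).le (hξ0 l)
    simp only [hPb]
    exact add_nonneg (mul_nonneg h1 (hξ0 j))
      (mul_nonneg (mul_nonneg hK0.le hζ0) (mul_nonneg h2 (hξ0 j)))
  -- the set of vanishing limits
  set J : Finset (Fin (n+1)) := Finset.univ.filter (fun i => ξ i = 0) with hJ
  have hprodK' : (0:ℝ) < ∏ j, K' j := Finset.prod_pos fun j _ => hK' j
  have hprodK : (0:ℝ) < ∏ j, K j := Finset.prod_pos fun j _ => hK j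
  have hδpt : ∀ L : ℝ, δf L = L * ((∏ j, K' j) * ∏ j, x j L) := by
    intro L
    simp only [hδf, srlkDelta, ← Finset.prod_mul_distrib]
  have hJne : J.Nonempty := by
    have hplim : Tendsto (fun L => ∏ j, x j L) atTop (nhds (∏ j, ξ j)) :=
      tendsto_finset_prod _ fun j _ => hξ j
    have h2 : Tendsto (fun L : ℝ => δf L * ((∏ j, K' j)⁻¹ * L⁻¹)) atTop
        (nhds (d * ((∏ j, K' j)⁻¹ * 0))) :=
      hδ.mul (tendsto_const_nhds.mul tendsto_inv_atTop_zero)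
    have heqq : (fun L : ℝ => δf L * ((∏ j, K' j)⁻¹ * L⁻¹))
        =ᶠ[atTop] fun L => ∏ j, x j L := by
      filter_upwards [hev] with L hL
      rw [hδpt L]
      field_simp
    have h3 : Tendsto (fun L => ∏ j, x j L) atTop (nhds 0) := by
      have := h2.congr' heqq
      simpa using this
    have h4 : ∏ j, ξ j = 0 := tendsto_nhds_unique hplim h3
    obtain ⟨i, _, hi⟩ := Finset.prod_eq_zero_iff.1 h4
    exact ⟨i, by simp [hJ, hi]⟩
  set i0 : Fin (n+1) := J.min' hJne with hi0def
  have hi0J : ξ i0 = 0 := by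
    have h := J.min'_mem hJne
    exact (Finset.mem_filter.1 h).2
  have hminJ : ∀ i, ξ i = 0 → i0 ≤ i := fun i hi =>
    J.min'_le i (by rw [hJ, Finset.mem_filter]; exact ⟨Finset.mem_univ i, hi⟩)
  have hprodzero : ∀ (g : Fin (n+1) → ℝ) (j : Fin (n+1)), i0 < j →
      (∏ l ∈ Finset.Iio j, (g l * ξ l)) = 0 := by
    intro g j hj
    apply Finset.prod_eq_zero (Finset.mem_Iio.2 hj)
    rw [hi0J, mul_zero]
  have hPbzero : ∀ j, i0 < j → Pb j = 0 := by
    intro j hj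
    simp only [hPb]
    rw [hprodzero K' j hj, hprodzero K j hj]
    ring
  have hNi0 : N i0 = d + s := by
    have h := hLE i0
    rw [hi0J, zero_mul, Finset.sum_eq_zero (fun j hj =>
      hPbzero j (Finset.mem_Ioi.1 hj))] at h
    linarith
  have hNgt : ∀ i, i0 < i → N i = ξ i + d + s := by
    intro i hi
    have hi0' : i ≠ 0 :=
      Fin.pos_iff_ne_zero.1 (lt_of_le_of_lt (Fin.zero_le i0) hi)
    have hWone : Wb i = 1 := by
      simp only [hWb]
      rw [if_neg hi0', hprodzero K' i hi, hprodzero K i hi]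
      ring
    have h := hLE i
    rw [hWone, mul_one, Finset.sum_eq_zero (fun j hj =>
      hPbzero j (lt_trans hi (Finset.mem_Ioi.1 hj)))] at h
    linarith
  have hNlt : ∀ i, i < i0 → ξ i + d + s ≤ N i ∧ 0 < ξ i := by
    intro i hi
    have hxi : 0 < ξ i := by
      rcases lt_or_eq_of_le (hξ0 i) with h | h
      · exact h
      · exact absurd (hminJ i h.symm) (not_le.2 hi)
    refine ⟨?_, hxi⟩
    have h1 := hLE i
    have h2 : ξ i * 1 ≤ ξ i * Wb i :=
      mul_le_mul_of_nonneg_left (hWb1 i) (hξ0 i)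
    have h3 : 0 ≤ ∑ j ∈ Finset.Ioi i, Pb j :=
      Finset.sum_nonneg fun j _ => hPb0 j
    nlinarith
  have hds : d + s = N0 := by
    by_cases hi0I : i0 ∈ I
    · rw [← hIeq i0 hi0I, hNi0]
    · exfalso
      have hgt : N0 < d + s := by rw [← hNi0]; exact hIgt i0 hi0I
      obtain ⟨i1, hi1⟩ := hne
      rcases lt_trichotomy i1 i0 with h | h | h
      · have ha := (hNlt i1 h).1
        have hb := (hNlt i1 h).2
        have hc := hIeq i1 hi1
        linarith
      · rw [h] at hi1; exact hi0I hi1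
      · have ha := hNgt i1 h
        have hb := hIeq i1 hi1
        have hc := hξ0 i1
        linarith
  have hi0I : i0 ∈ I := by
    by_contra h
    have h2 := hIgt i0 h
    rw [hNi0, hds] at h2
    exact lt_irrefl _ h2
  have hIsubJ : ∀ i ∈ I, ξ i = 0 := by
    intro i hi
    rcases lt_trichotomy i i0 with h | h | h
    · exfalso
      have h1 := (hNlt i h).1
      have h2 := (hNlt i h).2
      have h3 := hIeq i hi
      linarith
    · rw [h]; exact hi0J
    · have h1 := hNgt i h
      have h2 := hIeq i hi
      linarith
  have hnotI : ∀ i, i ∉ I → 0 < ξ i := by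
    intro i hi
    rcases lt_trichotomy i i0 with h | h | h
    · exact (hNlt i h).2
    · exfalso; rw [h] at hi; exact hi hi0I
    · have h1 := hNgt i h
      have h2 := hIgt i hi
      linarith
  -- d > 0
  set u : ℝ → ℝ := fun L => δf L / (∏ j, K' j) with hu
  have hulim : Tendsto u atTop (nhds (d / ∏ j, K' j)) := hδ.div_const _
  have hupt : ∀ L : ℝ, u L = L * ∏ j, x j L := by
    intro L
    simp only [hu]
    rw [hδpt L]
    field_simp
  have hd0 : 0 ≤ d := by
    refine ge_of_tendsto hδ (hev.mono fun L hL => ?_)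
    rw [hδpt L]
    have : (0:ℝ) ≤ ∏ j, x j L :=
      Finset.prod_nonneg fun j _ => (hbr.posX j L hL).le
    positivity
  have hs_eq : s = K0 * (∏ j, K j) * (ζ * (d / ∏ j, K' j)) := by
    have hσpt : ∀ L : ℝ, σf L = K0 * (∏ j, K j) * (z L * u L) := by
      intro L
      simp only [hσf, srlkSigma, Finset.prod_mul_distrib]
      rw [hupt L]
      ring
    have hT : Tendsto σf atTop
        (nhds (K0 * (∏ j, K j) * (ζ * (d / ∏ j, K' j)))) := by
      have h := (tendsto_const_nhds :
        Tendsto (fun _ : ℝ => K0 * (∏ j, K j)) atTop (nhds (K0 * (∏ j, K j)))).mul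
        (hζ.mul hulim)
      exact Tendsto.congr (fun L => (hσpt L).symm) h
    exact tendsto_nhds_unique hσ hT
  have hdpos : 0 < d := by
    rcases lt_or_eq_of_le hd0 with h | h
    · exact h
    · exfalso
      have hs0 : s = 0 := by rw [hs_eq, ← h]; simp
      rw [← h, hs0] at hds
      linarith
  -- ratio limits
  have hrat : ∀ j : Fin (n+1), ∃ ρ : ℝ, 0 < ρ ∧ (j ∈ I →
      Tendsto (fun L => x j L / x i0 L) atTop (nhds ρ)) := by
    intro j
    by_cases hjI : j ∈ I
    swap
    · exact ⟨1, one_pos, fun h => absurd h hjI⟩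
    rcases eq_or_ne j i0 with rfl | hji0
    · refine ⟨1, one_pos, fun _ => ?_⟩
      refine Tendsto.congr' ?_ tendsto_const_nhds
      filter_upwards [hev] with L hL
      exact (div_self (hbr.posX i0 L hL).ne').symm
    · have hij : i0 < j := lt_of_le_of_ne (hminJ j (hIsubJ j hjI)) (Ne.symm hji0)
      have hj0 : j ≠ 0 :=
        Fin.pos_iff_ne_zero.1 (lt_of_le_of_lt (Fin.zero_le i0) hij)
      have hstar : ∀ L : ℝ, 0 < L →
          x j L = x i0 L * w i0 L + ∑ l ∈ Finset.Ioo i0 j, P l L := by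
        intro L hL
        have h1 := hME i0 L hL
        have h2 := hME j L hL
        have hunion : Finset.Ioi i0 = Finset.Ioc i0 j ∪ Finset.Ioi j := by
          ext a
          simp only [Finset.mem_Ioi, Finset.mem_union, Finset.mem_Ioc]
          constructor
          · intro h
            rcases le_or_gt a j with h' | h'
            · exact Or.inl ⟨h, h'⟩
            · exact Or.inr h'
          · rintro (⟨h, _⟩ | h)
            · exact h
            · exact lt_trans hij h
        have hdisj : Disjoint (Finset.Ioc i0 j) (Finset.Ioi j) := by
          rw [Finset.disjoint_left]
          intro a ha ha'
          exact absurd (Finset.mem_Ioi.1 ha') (not_lt.2 (Finset.mem_Ioc.1 ha).2)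
        have hsplit : ∑ l ∈ Finset.Ioi i0, P l L
            = (∑ l ∈ Finset.Ioc i0 j, P l L) + ∑ l ∈ Finset.Ioi j, P l L := by
          rw [hunion, Finset.sum_union hdisj]
        have hioc : ∑ l ∈ Finset.Ioc i0 j, P l L
            = P j L + ∑ l ∈ Finset.Ioo i0 j, P l L := by
          rw [← Finset.Ioo_insert_right hij, Finset.sum_insert (by simp)]
        have hPj : x j L * w j L - P j L = x j L := by
          simp only [hP, hw]
          rw [if_neg hj0]
          ring
        have hNN : N i0 = N j := by rw [hIeq i0 hi0I, hIeq j hjI]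
        have h3 := h1
        rw [hNN, h2] at h3
        rw [hsplit, hioc] at h3
        linarith
      set ρ0 : ℝ := Wb i0 + ∑ l ∈ Finset.Ioo i0 j,
        (K' i0 * ((∏ m ∈ (Finset.Iio l).erase i0, (K' m * ξ m)) * ξ l)
          + K0 * ζ * (K i0 * ((∏ m ∈ (Finset.Iio l).erase i0, (K m * ξ m)) * ξ l)))
        with hρ0
      have hρ0pos : 0 < ρ0 := by
        have hsum : 0 ≤ ∑ l ∈ Finset.Ioo i0 j,
            (K' i0 * ((∏ m ∈ (Finset.Iio l).erase i0, (K' m * ξ m)) * ξ l)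
              + K0 * ζ * (K i0 * ((∏ m ∈ (Finset.Iio l).erase i0, (K m * ξ m)) * ξ l))) := by
          refine Finset.sum_nonneg fun l _ => ?_
          have p1 : 0 ≤ ∏ m ∈ (Finset.Iio l).erase i0, (K' m * ξ m) :=
            Finset.prod_nonneg fun m _ => mul_nonneg (hK' m).le (hξ0 m)
          have p2 : 0 ≤ ∏ m ∈ (Finset.Iio l).erase i0, (K m * ξ m) :=
            Finset.prod_nonneg fun m _ => mul_nonneg (hK m).le (hξ0 m)
          exact add_nonneg
            (mul_nonneg (hK' i0).le (mul_nonneg p1 (hξ0 l)))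
            (mul_nonneg (mul_nonneg hK0.le hζ0)
              (mul_nonneg (hK i0).le (mul_nonneg p2 (hξ0 l))))
        have := hWb1 i0
        rw [hρ0]
        linarith
      refine ⟨ρ0, hρ0pos, fun _ => ?_⟩
      have hGlim : Tendsto (fun L => w i0 L + ∑ l ∈ Finset.Ioo i0 j,
          (K' i0 * ((∏ m ∈ (Finset.Iio l).erase i0, (K' m * x m L)) * x l L)
            + K0 * z L * (K i0 * ((∏ m ∈ (Finset.Iio l).erase i0, (K m * x m L)) * x l L))))
          atTop (nhds ρ0) := by
        rw [hρ0]
        refine (hwlim i0).add (tendsto_finset_sum _ fun l _ => ?_)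
        refine (tendsto_const_nhds.mul ((tendsto_finset_prod _ fun m _ =>
          tendsto_const_nhds.mul (hξ m)).mul (hξ l))).add ?_
        exact (tendsto_const_nhds.mul hζ).mul (tendsto_const_nhds.mul
          ((tendsto_finset_prod _ fun m _ =>
            tendsto_const_nhds.mul (hξ m)).mul (hξ l)))
      refine hGlim.congr' ?_
      filter_upwards [hev] with L hL
      have hx0 : x i0 L ≠ 0 := (hbr.posX i0 L hL).ne'
      have hPterm : ∀ l ∈ Finset.Ioo i0 j, P l L = x i0 L *
          (K' i0 * ((∏ m ∈ (Finset.Iio l).erase i0, (K' m * x m L)) * x l L)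
            + K0 * z L * (K i0 * ((∏ m ∈ (Finset.Iio l).erase i0, (K m * x m L)) * x l L))) := by
        intro l hl
        have hmem : i0 ∈ Finset.Iio l := Finset.mem_Iio.2 (Finset.mem_Ioo.1 hl).1
        simp only [hP]
        rw [← Finset.mul_prod_erase _ (fun m => K' m * x m L) hmem,
          ← Finset.mul_prod_erase _ (fun m => K m * x m L) hmem]
        ring
      rw [hstar L hL, Finset.sum_congr rfl hPterm, ← Finset.mul_sum]
      field_simp
  choose ρ hρpos hρlim using hrat
  -- the scaling limit
  have hrne : ((I.card : ℝ)) ≠ 0 :=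
    Nat.cast_ne_zero.2 (Finset.card_pos.2 hne).ne'
  set D : ℝ → ℝ := fun L =>
    (∏ j ∈ Finset.univ \ I, x j L) * ∏ j ∈ I, (x j L / x i0 L) with hD
  set Dinf : ℝ := (∏ j ∈ Finset.univ \ I, ξ j) * ∏ j ∈ I, ρ j with hDinf
  have hDlim : Tendsto D atTop (nhds Dinf) :=
    (tendsto_finset_prod _ fun j _ => hξ j).mul
      (tendsto_finset_prod _ fun j hj => hρlim j hj)
  have hDpos : 0 < Dinf := by
    rw [hDinf]
    apply mul_pos
    · exact Finset.prod_pos fun j hj => hnotI j (Finset.mem_sdiff.1 hj).2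
    · exact Finset.prod_pos fun j _ => hρpos j
  set v : ℝ → ℝ := fun L => L * (x i0 L) ^ I.card with hv
  have hvpt : ∀ L : ℝ, 0 < L → v L = u L * (D L)⁻¹ := by
    intro L hL
    have hx0 : (0:ℝ) < x i0 L := hbr.posX i0 L hL
    have hprodpos : (0:ℝ) < ∏ j, x j L :=
      Finset.prod_pos fun j _ => hbr.posX j L hL
    have hDval : D L = (∏ j, x j L) / (x i0 L) ^ I.card := by
      simp only [hD]
      rw [Finset.prod_div_distrib, Finset.prod_const]
      rw [mul_div_assoc']
      rw [Finset.prod_sdiff (Finset.subset_univ I)]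
    simp only [hv]
    rw [hupt L, hDval, inv_div]
    field_simp
  have hvlim : Tendsto v atTop (nhds ((d / ∏ j, K' j) * Dinf⁻¹)) := by
    refine Tendsto.congr' ?_ (hulim.mul (hDlim.inv₀ hDpos.ne'))
    filter_upwards [hev] with L hL
    exact (hvpt L hL).symm
  set b : ℝ := (d / ∏ j, K' j) * Dinf⁻¹ with hb
  have hbpos : 0 < b := mul_pos (div_pos hdpos hprodK') (inv_pos.2 hDpos)
  have hT1 : Tendsto (fun L => (v L) ^ ((1:ℝ)/(I.card:ℝ))) atTop
      (nhds (b ^ ((1:ℝ)/(I.card:ℝ)))) :=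
    (Real.continuousAt_rpow_const b _ (Or.inl hbpos.ne')).tendsto.comp hvlim
  have hT2 : Tendsto (fun L : ℝ => L ^ ((1:ℝ)/(I.card:ℝ)) * x i0 L) atTop
      (nhds (b ^ ((1:ℝ)/(I.card:ℝ)))) := by
    refine hT1.congr' ?_
    filter_upwards [hev] with L hL
    have hx0 : (0:ℝ) < x i0 L := hbr.posX i0 L hL
    simp only [hv]
    rw [Real.mul_rpow hL.le (pow_nonneg hx0.le _)]
    congr 1
    rw [← Real.rpow_natCast (x i0 L) I.card, ← Real.rpow_mul hx0.le]
    rw [mul_one_div, div_self hrne, Real.rpow_one]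
  constructor
  · intro i hi
    refine ⟨ρ i * b ^ ((1:ℝ)/(I.card:ℝ)),
      mul_pos (hρpos i) (Real.rpow_pos_of_pos hbpos _), ?_⟩
    refine ((hρlim i hi).mul hT2).congr' ?_
    filter_upwards [hev] with L hL
    have hx0 : x i0 L ≠ 0 := (hbr.posX i0 L hL).ne'
    field_simp
  · intro i hi
    exact ⟨ξ i, hnotI i hi, hξ i⟩
end

section
/- Consider an SRLK steady-state branch and let N° = min(N_1, …, N_n) be the common total copy number of the limiting components. Then there exists c_z > 0 such that z(L) → c_z as L → +∞, and the signalling and dummy functions satisfy lim_{L→+∞} σ(L) = (K_0·c_z·Π_{i=1}^{n}K_i)/(Π_{i=1}^{n}K_i' + K_0·c_z·Π_{i=1}^{n}K_i)·N° and lim_{L→+∞} δ(L) = (Π_{i=1}^{n}K_i')/(Π_{i=1}^{n}K_i' + K_0·c_z·Π_{i=1}^{n}K_i)·N°. -/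
open Filter Polynomial

theorem exists_lim_of_algebraic (f : ℝ → ℝ) (hc : ContinuousOn f (Set.Ioi 0))
    (hb : ∃ C : ℝ, ∀ L : ℝ, 0 < L → |f L| ≤ C) (ha : AlgebraicOnIoi f) :
    ∃ ℓ : ℝ, Tendsto f atTop (nhds ℓ) := by
  obtain ⟨C, hC⟩ := hb
  obtain ⟨m, hm, p, q, hq, heq⟩ := ha
  -- boundedness facts
  have hbdd : IsBoundedUnder (· ≤ ·) atTop f := by
    refine ⟨C, ?_⟩
    rw [eventually_map]
    filter_upwards [eventually_gt_atTop (0:ℝ)] with L hL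
    exact (abs_le.mp (hC L hL)).2
  have hbdd' : IsBoundedUnder (· ≥ ·) atTop f := by
    refine ⟨-C, ?_⟩
    rw [eventually_map]
    filter_upwards [eventually_gt_atTop (0:ℝ)] with L hL
    exact (abs_le.mp (hC L hL)).1
  set a := liminf f atTop with ha'
  set b := limsup f atTop with hb'
  have hab : a ≤ b := liminf_le_limsup hbdd hbdd'
  -- the cleared-denominator polynomials
  set Q : Polynomial ℝ := ∏ i : Fin m, q i with hQ
  set Qi : Fin m → Polynomial ℝ := fun i => ∏ j ∈ Finset.univ.erase i, q j with hQi
  have hQeval : ∀ L : ℝ, 0 < L → Q.eval L ≠ 0 := by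
    intro L hL
    rw [hQ, eval_prod]
    exact Finset.prod_ne_zero_iff.2 fun i _ => hq i L hL
  have hfac : ∀ i : Fin m, Q = q i * Qi i := by
    intro i
    rw [hQ, hQi, Finset.mul_prod_erase _ _ (Finset.mem_univ i)]
  have key : ∀ L : ℝ, 0 < L →
      Q.eval L * f L ^ m + ∑ i : Fin m, (p i * Qi i).eval L * f L ^ (i:ℕ) = 0 := by
    intro L hL
    have h1 := heq L hL
    have h2 : Q.eval L * (f L ^ m + ∑ i : Fin m, ((p i).eval L / (q i).eval L) * f L ^ (i : ℕ)) = 0 := by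
      rw [h1, mul_zero]
    rw [mul_add, Finset.mul_sum] at h2
    rw [← h2]
    congr 1
    apply Finset.sum_congr rfl
    intro i _
    rw [eval_mul, hfac i, eval_mul]
    field_simp [hq i L hL]
  -- a = b
  have haeqb : a = b := by
    by_contra hne
    have hlt : a < b := lt_of_le_of_ne hab hne
    -- every value in (a,b) is attained at arbitrarily large L
    have hattain : ∀ c ∈ Set.Ioo a b, ∀ t : ℝ, ∃ L, t ≤ L ∧ 1 ≤ L ∧ f L = c := by
      rintro c ⟨hac, hcb⟩ t
      have hfreq1 : ∃ᶠ L in atTop, f L < c := frequently_lt_of_liminf_lt hbdd.isCoboundedUnder_ge hac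
      have hfreq2 : ∃ᶠ L in atTop, c < f L := frequently_lt_of_lt_limsup hbdd'.isCoboundedUnder_le hcb
      obtain ⟨L1, hL1, hfL1⟩ := (frequently_atTop.mp hfreq1) (max t 1)
      obtain ⟨L2, hL2, hfL2⟩ := (frequently_atTop.mp hfreq2) L1
      have h01 : (1:ℝ) ≤ L1 := le_trans (le_max_right t 1) hL1
      have hsub : Set.Icc L1 L2 ⊆ Set.Ioi (0:ℝ) := fun y hy =>
        lt_of_lt_of_le (lt_of_lt_of_le one_pos h01) hy.1
      have hIVT := intermediate_value_Icc hL2 (hc.mono hsub)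
      have hcmem : c ∈ Set.Icc (f L1) (f L2) := ⟨le_of_lt hfL1, le_of_lt hfL2⟩
      obtain ⟨L, hLmem, hfL⟩ := hIVT hcmem
      exact ⟨L, le_trans (le_trans (le_max_left t 1) hL1) hLmem.1,
        le_trans h01 hLmem.1, hfL⟩
    -- for each such c, the polynomial in L vanishes identically
    have hpoly : ∀ c ∈ Set.Ioo a b,
        (Polynomial.C (c ^ m) * Q + ∑ i : Fin m, Polynomial.C (c ^ (i:ℕ)) * (p i * Qi i)) = 0 := by
      intro c hc'
      apply Polynomial.eq_zero_of_infinite_isRoot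
      have hsubset : {L : ℝ | 1 ≤ L ∧ f L = c} ⊆
          {L : ℝ | IsRoot (Polynomial.C (c ^ m) * Q + ∑ i : Fin m, Polynomial.C (c ^ (i:ℕ)) * (p i * Qi i)) L} := by
        rintro L ⟨hL1, hfL⟩
        have hL0 : (0:ℝ) < L := lt_of_lt_of_le one_pos hL1
        have := key L hL0
        rw [hfL] at this
        simp only [IsRoot, eval_add, eval_mul, eval_C, eval_finset_sum]
        rw [← this]
        congr 1
        · ring
        · exact Finset.sum_congr rfl fun i _ => by rw [eval_mul]; ring
      apply Set.Infinite.mono hsubset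
      intro hfin
      obtain ⟨M, hM⟩ := hfin.bddAbove
      obtain ⟨L, hLM, hL1, hfL⟩ := hattain c hc' (M + 1)
      have : L ≤ M := hM ⟨hL1, hfL⟩
      linarith
    -- evaluate at L = 1 to get a univariate polynomial in c vanishing on (a,b)
    set ψ : Polynomial ℝ := Polynomial.C (Q.eval 1) * Polynomial.X ^ m
        + ∑ i : Fin m, Polynomial.C ((p i * Qi i).eval 1) * Polynomial.X ^ (i:ℕ) with hψ
    have hψroot : ∀ c ∈ Set.Ioo a b, ψ.eval c = 0 := by
      intro c hc'
      have h := hpoly c hc'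
      have h1 : (Polynomial.C (c ^ m) * Q + ∑ i : Fin m, Polynomial.C (c ^ (i:ℕ)) * (p i * Qi i)).eval 1 = 0 := by
        rw [h]; simp
      rw [hψ]
      simp only [eval_add, eval_mul, eval_C, eval_pow, eval_X, eval_finset_sum] at h1 ⊢
      rw [← h1]
      congr 1
      · ring
      · exact Finset.sum_congr rfl fun i _ => by ring
    have hψ0 : ψ = 0 := by
      apply Polynomial.eq_zero_of_infinite_isRoot
      apply Set.Infinite.mono (fun c hc' => hψroot c hc')
      exact Set.Ioo_infinite hlt
    have hcoeff : ψ.coeff m = Q.eval 1 := by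
      rw [hψ]
      rw [Polynomial.coeff_add, Polynomial.coeff_C_mul, Polynomial.coeff_X_pow, if_pos rfl]
      rw [Polynomial.finset_sum_coeff]
      have : ∀ i : Fin m, (Polynomial.C ((p i * Qi i).eval 1) * Polynomial.X ^ (i:ℕ)).coeff m = 0 := by
        intro i
        rw [Polynomial.coeff_C_mul, Polynomial.coeff_X_pow, if_neg (Nat.ne_of_lt i.2).symm, mul_zero]
      rw [Finset.sum_eq_zero fun i _ => this i]
      ring
    rw [hψ0] at hcoeff
    simp at hcoeff
    exact hQeval 1 one_pos hcoeff.symm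
  exact ⟨b, tendsto_of_liminf_eq_limsup haeqb rfl hbdd hbdd'⟩


/-- along any SRLK steady-state branch, with `N° = min_i N_i` the
common copy number of the limiting components, `z → c_z > 0` and the signalling and
dummy functions converge to the stated explicit limits as `L → +∞`. -/
theorem srlk_sigma_delta_explicit_limits
    (n : ℕ) (K0 : ℝ) (K K' : Fin (n+1) → ℝ) (Nz : ℝ) (N : Fin (n+1) → ℝ)
    (hK0 : 0 < K0) (hK : ∀ i, 0 < K i) (hK' : ∀ i, 0 < K' i)
    (hNz : 0 < Nz) (hN : ∀ i, 0 < N i)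
    (z : ℝ → ℝ) (x : Fin (n+1) → ℝ → ℝ)
    (hbr : SRLKBranch n K0 K K' Nz N z x) :
    ∃ cz : ℝ, 0 < cz ∧ Filter.Tendsto z Filter.atTop (nhds cz) ∧
      Filter.Tendsto (fun L => srlkSigma n K0 K (z L) L (fun i => x i L))
        Filter.atTop
        (nhds ((K0 * cz * ∏ i, K i) / ((∏ i, K' i) + K0 * cz * ∏ i, K i)
          * Finset.univ.inf' Finset.univ_nonempty N)) ∧
      Filter.Tendsto (fun L => srlkDelta n K' L (fun i => x i L))
        Filter.atTop
        (nhds ((∏ i, K' i) / ((∏ i, K' i) + K0 * cz * ∏ i, K i)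
          * Finset.univ.inf' Finset.univ_nonempty N)) := by
  classical
  obtain ⟨cz, hcz⟩ := exists_lim_of_algebraic z hbr.contZ hbr.bddZ hbr.algZ
  choose ξ hξ using fun i => exists_lim_of_algebraic (x i) (hbr.contX i) (hbr.bddX i) (hbr.algX i)
  set σf : ℝ → ℝ := fun L => srlkSigma n K0 K (z L) L (fun i => x i L) with hσf
  set δf : ℝ → ℝ := fun L => srlkDelta n K' L (fun i => x i L) with hδf
  have hσcont : ContinuousOn σf (Set.Ioi 0) := by
    simp only [hσf, srlkSigma]
    exact ((continuousOn_const.mul hbr.contZ).mul continuousOn_id).mul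
      (continuousOn_finset_prod _ fun j _ => continuousOn_const.mul (hbr.contX j))
  have hδcont : ContinuousOn δf (Set.Ioi 0) := by
    simp only [hδf, srlkDelta]
    exact continuousOn_id.mul
      (continuousOn_finset_prod _ fun j _ => continuousOn_const.mul (hbr.contX j))
  obtain ⟨s, hσ⟩ := exists_lim_of_algebraic σf hσcont hbr.bddSigma hbr.algSigma
  obtain ⟨d, hδ⟩ := exists_lim_of_algebraic δf hδcont hbr.bddDelta hbr.algDelta
  have hξnn : ∀ i, 0 ≤ ξ i := fun i => ge_of_tendsto (hξ i)
    (by filter_upwards [eventually_gt_atTop (0:ℝ)] with L hL; exact (hbr.posX i L hL).le)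
  have hcznn : 0 ≤ cz := ge_of_tendsto hcz
    (by filter_upwards [eventually_gt_atTop (0:ℝ)] with L hL; exact (hbr.posZ L hL).le)
  have hσpos : ∀ L : ℝ, 0 < L → 0 < σf L := by
    intro L hL
    have h1 : 0 < ∏ j, (K j * x j L) :=
      Finset.prod_pos fun j _ => mul_pos (hK j) (hbr.posX j L hL)
    exact mul_pos (mul_pos (mul_pos hK0 (hbr.posZ L hL)) hL) h1
  have hδpos : ∀ L : ℝ, 0 < L → 0 < δf L := fun L hL =>
    mul_pos hL (Finset.prod_pos fun j _ => mul_pos (hK' j) (hbr.posX j L hL))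
  have hsnn : 0 ≤ s := ge_of_tendsto hσ
    (by filter_upwards [eventually_gt_atTop (0:ℝ)] with L hL; exact (hσpos L hL).le)
  have hdnn : 0 ≤ d := ge_of_tendsto hδ
    (by filter_upwards [eventually_gt_atTop (0:ℝ)] with L hL; exact (hδpos L hL).le)
  set P : ℝ := ∏ i, K i with hP
  set P' : ℝ := ∏ i, K' i with hP'
  have hPpos : 0 < P := Finset.prod_pos fun i _ => hK i
  have hP'pos : 0 < P' := Finset.prod_pos fun i _ => hK' i
  -- the exact ratio identity σ·P' = K0·z·P·δ
  have hRpt : ∀ L : ℝ, σf L * P' = K0 * z L * P * δf L := by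
    intro L
    simp only [hσf, hδf, srlkSigma, srlkDelta, hP, hP', Finset.prod_mul_distrib]
    ring
  have hR : s * P' = K0 * cz * P * d := by
    have h1 : Filter.Tendsto (fun L => σf L * P') Filter.atTop (nhds (s * P')) :=
      hσ.mul tendsto_const_nhds
    have h2 : Filter.Tendsto (fun L => K0 * z L * P * δf L) Filter.atTop
        (nhds (K0 * cz * P * d)) :=
      ((tendsto_const_nhds.mul hcz).mul tendsto_const_nhds).mul hδ
    exact tendsto_nhds_unique h1 (h2.congr fun L => (hRpt L).symm)
  -- ∏ ξ = 0
  have hprodx : Filter.Tendsto (fun L => ∏ j, x j L) Filter.atTop (nhds (∏ j, ξ j)) :=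
    tendsto_finset_prod _ fun j _ => hξ j
  have hinv : Filter.Tendsto (fun L : ℝ => (L * P')⁻¹) Filter.atTop (nhds 0) :=
    tendsto_inv_atTop_zero.comp (Filter.Tendsto.atTop_mul_const hP'pos tendsto_id)
  have hzero : Filter.Tendsto (fun L => δf L * (L * P')⁻¹) Filter.atTop (nhds 0) := by
    have := hδ.mul hinv
    rwa [mul_zero] at this
  have hprod0 : (∏ j, ξ j) = 0 := by
    refine tendsto_nhds_unique hprodx (hzero.congr' ?_)
    filter_upwards [eventually_gt_atTop (0:ℝ)] with L hL
    have hne : L * P' ≠ 0 := (mul_pos hL hP'pos).ne'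
    simp only [hδf, srlkDelta, hP', Finset.prod_mul_distrib]
    have hK'ne : (∏ i, K' i) ≠ 0 := Finset.prod_ne_zero_iff.2 fun i _ => (hK' i).ne'
    field_simp
  obtain ⟨j0, -, hj0⟩ := Finset.prod_eq_zero_iff.mp hprod0
  -- limit equations
  set A : ℝ := ξ 0 + ∑ j ∈ Finset.Ioi (0 : Fin (n+1)),
      (∏ l ∈ Finset.Iio j, (K l * ξ l)) * ξ j with hA
  set B : ℝ := ∑ j ∈ Finset.Ioi (0 : Fin (n+1)),
      (∏ l ∈ Finset.Iio j, (K' l * ξ l)) * ξ j with hB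
  have htA : Filter.Tendsto (fun L => x 0 L + ∑ j ∈ Finset.Ioi (0 : Fin (n+1)),
      (∏ l ∈ Finset.Iio j, (K l * x l L)) * x j L) Filter.atTop (nhds A) :=
    (hξ 0).add (tendsto_finset_sum _ fun j _ =>
      (tendsto_finset_prod _ fun l _ => tendsto_const_nhds.mul (hξ l)).mul (hξ j))
  have htB : Filter.Tendsto (fun L => ∑ j ∈ Finset.Ioi (0 : Fin (n+1)),
      (∏ l ∈ Finset.Iio j, (K' l * x l L)) * x j L) Filter.atTop (nhds B) :=
    tendsto_finset_sum _ fun j _ =>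
      (tendsto_finset_prod _ fun l _ => tendsto_const_nhds.mul (hξ l)).mul (hξ j)
  have hEz : Nz = cz + K0 * cz * A + s := by
    have h2 : Filter.Tendsto (fun L => z L + K0 * z L *
        (x 0 L + ∑ j ∈ Finset.Ioi (0 : Fin (n+1)),
          (∏ l ∈ Finset.Iio j, (K l * x l L)) * x j L) + σf L) Filter.atTop
        (nhds (cz + K0 * cz * A + s)) :=
      (hcz.add ((tendsto_const_nhds.mul hcz).mul htA)).add hσ
    refine tendsto_nhds_unique (tendsto_const_nhds.congr' ?_) h2
    filter_upwards [eventually_gt_atTop (0:ℝ)] with L hL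
    exact (hbr.steady L hL).1
  have hE0 : N 0 = ξ 0 + B + d + K0 * cz * A + s := by
    have h2 : Filter.Tendsto (fun L => x 0 L + (∑ j ∈ Finset.Ioi (0 : Fin (n+1)),
          (∏ l ∈ Finset.Iio j, (K' l * x l L)) * x j L) + δf L + K0 * z L *
        (x 0 L + ∑ j ∈ Finset.Ioi (0 : Fin (n+1)),
          (∏ l ∈ Finset.Iio j, (K l * x l L)) * x j L) + σf L) Filter.atTop
        (nhds (ξ 0 + B + d + K0 * cz * A + s)) :=
      ((((hξ 0).add htB).add hδ).add ((tendsto_const_nhds.mul hcz).mul htA)).add hσ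
    refine tendsto_nhds_unique (tendsto_const_nhds.congr' ?_) h2
    filter_upwards [eventually_gt_atTop (0:ℝ)] with L hL
    exact (hbr.steady L hL).2.1
  have hEi : ∀ i : Fin (n+1), 0 < i → N i = ξ i + (∑ j ∈ Finset.Ici i,
      ((∏ l ∈ Finset.Iio j, (K' l * ξ l)) * ξ j
        + K0 * cz * (∏ l ∈ Finset.Iio j, (K l * ξ l)) * ξ j)) + d + s := by
    intro i hi
    have h2 : Filter.Tendsto (fun L => x i L + (∑ j ∈ Finset.Ici i,
        ((∏ l ∈ Finset.Iio j, (K' l * x l L)) * x j L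
          + K0 * z L * (∏ l ∈ Finset.Iio j, (K l * x l L)) * x j L))
        + δf L + σf L) Filter.atTop
        (nhds (ξ i + (∑ j ∈ Finset.Ici i,
          ((∏ l ∈ Finset.Iio j, (K' l * ξ l)) * ξ j
            + K0 * cz * (∏ l ∈ Finset.Iio j, (K l * ξ l)) * ξ j)) + d + s)) :=
      (((hξ i).add (tendsto_finset_sum _ fun j _ =>
        ((tendsto_finset_prod _ fun l _ => tendsto_const_nhds.mul (hξ l)).mul (hξ j)).add
        (((tendsto_const_nhds.mul hcz).mul
          (tendsto_finset_prod _ fun l _ => tendsto_const_nhds.mul (hξ l))).mul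
          (hξ j)))).add hδ).add hσ
    refine tendsto_nhds_unique (tendsto_const_nhds.congr' ?_) h2
    filter_upwards [eventually_gt_atTop (0:ℝ)] with L hL
    exact (hbr.steady L hL).2.2 i hi
  -- nonnegativity of the residuals
  have hAnn : 0 ≤ A := add_nonneg (hξnn 0) (Finset.sum_nonneg fun j _ =>
    mul_nonneg (Finset.prod_nonneg fun l _ => mul_nonneg (hK l).le (hξnn l)) (hξnn j))
  have hBnn : 0 ≤ B := Finset.sum_nonneg fun j _ =>
    mul_nonneg (Finset.prod_nonneg fun l _ => mul_nonneg (hK' l).le (hξnn l)) (hξnn j)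
  have hle : ∀ i : Fin (n+1), s + d ≤ N i := by
    intro i
    rcases eq_or_lt_of_le (Fin.zero_le i) with h0 | h0
    · rw [← h0, hE0]
      have h1 : 0 ≤ K0 * cz * A := mul_nonneg (mul_nonneg hK0.le hcznn) hAnn
      linarith [hξnn 0, hBnn]
    · rw [hEi i h0]
      have hSnn : 0 ≤ ∑ j ∈ Finset.Ici i,
          ((∏ l ∈ Finset.Iio j, (K' l * ξ l)) * ξ j
            + K0 * cz * (∏ l ∈ Finset.Iio j, (K l * ξ l)) * ξ j) :=
        Finset.sum_nonneg fun j _ => add_nonneg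
          (mul_nonneg (Finset.prod_nonneg fun l _ =>
            mul_nonneg (hK' l).le (hξnn l)) (hξnn j))
          (mul_nonneg (mul_nonneg (mul_nonneg hK0.le hcznn)
            (Finset.prod_nonneg fun l _ => mul_nonneg (hK l).le (hξnn l))) (hξnn j))
      linarith [hξnn i]
  -- cz > 0
  have hczpos : 0 < cz := by
    rcases hcznn.lt_or_eq with h | h
    · exact h
    · exfalso
      have hs0 : s = 0 := by
        have h2 : s * P' = 0 := by rw [hR, ← h]; ring
        exact (mul_eq_zero.mp h2).resolve_right hP'pos.ne'
      have h3 : Nz = 0 := by rw [hEz, ← h, hs0]; ring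
      exact absurd h3 hNz.ne'
  -- the minimum is attained and equals s + d
  have hmin : N j0 = s + d := by
    rcases eq_or_lt_of_le (Fin.zero_le j0) with h0 | h0
    · have hξ0 : ξ 0 = 0 := by rw [h0]; exact hj0
      have hA0 : A = 0 := by
        rw [hA, hξ0, zero_add]
        apply Finset.sum_eq_zero
        intro j hj
        rw [Finset.prod_eq_zero (Finset.mem_Iio.mpr (Finset.mem_Ioi.mp hj))
          (show K 0 * ξ 0 = 0 by rw [hξ0, mul_zero]), zero_mul]
      have hB0 : B = 0 := by
        rw [hB]
        apply Finset.sum_eq_zero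
        intro j hj
        rw [Finset.prod_eq_zero (Finset.mem_Iio.mpr (Finset.mem_Ioi.mp hj))
          (show K' 0 * ξ 0 = 0 by rw [hξ0, mul_zero]), zero_mul]
      rw [← h0, hE0, hξ0, hA0, hB0]; ring
    · have hS0 : (∑ j ∈ Finset.Ici j0,
          ((∏ l ∈ Finset.Iio j, (K' l * ξ l)) * ξ j
            + K0 * cz * (∏ l ∈ Finset.Iio j, (K l * ξ l)) * ξ j)) = 0 := by
        apply Finset.sum_eq_zero
        intro j hj
        rcases eq_or_lt_of_le (Finset.mem_Ici.mp hj) with hji | hji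
        · rw [← hji, hj0]; ring
        · rw [Finset.prod_eq_zero (Finset.mem_Iio.mpr hji)
              (show K' j0 * ξ j0 = 0 by rw [hj0, mul_zero]),
            Finset.prod_eq_zero (Finset.mem_Iio.mpr hji)
              (show K j0 * ξ j0 = 0 by rw [hj0, mul_zero])]
          ring
      rw [hEi j0 h0, hS0, hj0]; ring
  have hinf : Finset.univ.inf' Finset.univ_nonempty N = s + d :=
    le_antisymm (le_trans (Finset.inf'_le N (Finset.mem_univ j0)) (le_of_eq hmin))
      (Finset.le_inf' _ _ fun i _ => hle i)
  have hden : (0:ℝ) < P' + K0 * cz * P := by positivity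
  refine ⟨cz, hczpos, hcz, ?_, ?_⟩
  · have hs : K0 * cz * P / (P' + K0 * cz * P)
        * (Finset.univ.inf' Finset.univ_nonempty N) = s := by
      rw [hinf]
      field_simp
      linear_combination -hR
    rw [hs]
    exact hσ
  · have hd : P' / (P' + K0 * cz * P)
        * (Finset.univ.inf' Finset.univ_nonempty N) = d := by
      rw [hinf]
      field_simp
      linear_combination hR
    rw [hd]
    exact hδ
end
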